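/- arXiv:2105.01550 — 8 statements merged into one kernel-verified Lean document; each statement's English description precedes it below -/
import Mathlib

section
/- Let H be a hypothesis set of functions from ℝ^d to ℝ such that there exist a distinguishing point x0 ∈ X and a function f0 ∈ H with f0(x0) = 0. If a margin-based loss φ : ℝ → [0,∞) is convex, then φ is not H-calibrated with respect to the adversarial 0/1 loss ℓ_γ. -/
open scoped RealInnerProductSpace

noncomputable section

/-- A loss assigns a value to a predictor `f`, a point `x`, and a label `y` (±1). -/
abbrev Loss (d : ℕ) := ((EuclideanSpace ℝ (Fin d)) → ℝ) → (EuclideanSpace ℝ (Fin d)) → ℝ → ℝ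

variable {d : ℕ}

/-- The inner (conditional) ℓ-risk. -/
def innerRisk (ℓ : Loss d) (f : EuclideanSpace ℝ (Fin d) → ℝ)
    (x : EuclideanSpace ℝ (Fin d)) (η : ℝ) : ℝ :=
  η * ℓ f x 1 + (1 - η) * ℓ f x (-1)

/-- The minimal inner ℓ-risk over a hypothesis set `H`. -/
def minInnerRisk (ℓ : Loss d) (H : Set (EuclideanSpace ℝ (Fin d) → ℝ))
    (x : EuclideanSpace ℝ (Fin d)) (η : ℝ) : ℝ :=
  ⨅ f : H, innerRisk ℓ f x η

/-- ℓ₁ is H-calibrated with respect to ℓ₂. -/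
def Calibrated (H : Set (EuclideanSpace ℝ (Fin d) → ℝ)) (ℓ₁ ℓ₂ : Loss d) : Prop :=
  ∀ ε > (0:ℝ), ∀ η ∈ Set.Icc (0:ℝ) 1, ∀ x : EuclideanSpace ℝ (Fin d), ‖x‖ ≤ 1 →
    ∃ δ > (0:ℝ), ∀ f ∈ H,
      innerRisk ℓ₁ f x η < minInnerRisk ℓ₁ H x η + δ →
      innerRisk ℓ₂ f x η < minInnerRisk ℓ₂ H x η + ε

/-- The adversarial 0/1 loss with perturbation radius γ. -/
def advLoss (γ : ℝ) : Loss d := fun f x y =>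
  ⨆ x' : Metric.closedBall x γ, (if y * f ↑x' ≤ 0 then (1:ℝ) else 0)

/-- A margin-based loss viewed as a loss. -/
def marginLoss (φ : ℝ → ℝ) : Loss d := fun f x y => φ (y * f x)

/-- The supremum-based surrogate of a margin-based loss. -/
def supLoss (γ : ℝ) (φ : ℝ → ℝ) : Loss d := fun f x y =>
  ⨆ x' : Metric.closedBall x γ, φ (y * f ↑x')

/-- Infimum of f over the closed γ-ball around x. -/
def infBall (γ : ℝ) (f : EuclideanSpace ℝ (Fin d) → ℝ) (x : EuclideanSpace ℝ (Fin d)) : ℝ :=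
  ⨅ x' : Metric.closedBall x γ, f ↑x'

/-- Supremum of f over the closed γ-ball around x. -/
def supBall (γ : ℝ) (f : EuclideanSpace ℝ (Fin d) → ℝ) (x : EuclideanSpace ℝ (Fin d)) : ℝ :=
  ⨆ x' : Metric.closedBall x γ, f ↑x'

/-- x is a distinguishing point for H. -/
def Distinguishing (γ : ℝ) (H : Set (EuclideanSpace ℝ (Fin d) → ℝ))
    (x : EuclideanSpace ℝ (Fin d)) : Prop :=
  ‖x‖ ≤ 1 ∧ (∃ f ∈ H, 0 < infBall γ f x) ∧ (∃ g ∈ H, supBall γ g x < 0)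

/-- H is regular for adversarial calibration. -/
def RegularAdv (γ : ℝ) (H : Set (EuclideanSpace ℝ (Fin d) → ℝ)) : Prop :=
  ∃ x, Distinguishing γ H x

/-- H is symmetric. -/
def SymmetricH (H : Set (EuclideanSpace ℝ (Fin d) → ℝ)) : Prop :=
  ∀ f ∈ H, -f ∈ H

/-- Linear hypothesis set. -/
def Hlin (d : ℕ) : Set (EuclideanSpace ℝ (Fin d) → ℝ) :=
  { f | ∃ w : EuclideanSpace ℝ (Fin d), ‖w‖ = 1 ∧ f = fun x => (inner ℝ w x : ℝ) }

/-- Generalized linear hypothesis set. -/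
def Hg (d : ℕ) (g : ℝ → ℝ) (G : ℝ) : Set (EuclideanSpace ℝ (Fin d) → ℝ) :=
  { f | ∃ (w : EuclideanSpace ℝ (Fin d)) (b : ℝ), ‖w‖ = 1 ∧ |b| ≤ G ∧
      f = fun x => g (inner ℝ w x : ℝ) + b }

/-- ReLU-based hypothesis set. -/
def Hrelu (d : ℕ) (G : ℝ) : Set (EuclideanSpace ℝ (Fin d) → ℝ) :=
  Hg d (fun t => max t 0) G

/-- One-layer ReLU neural network hypothesis set. -/
def Hnn (d n : ℕ) (Λ W : ℝ) : Set (EuclideanSpace ℝ (Fin d) → ℝ) :=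
  { f | ∃ (u : Fin n → ℝ) (w : Fin n → EuclideanSpace ℝ (Fin d)),
      (∑ j, |u j|) ≤ Λ ∧ (∀ j, ‖w j‖ ≤ W) ∧
      f = fun x => ∑ j, u j * max (inner ℝ (w j) x : ℝ) 0 }

/-- All (Borel) measurable functions. -/
def Hall (d : ℕ) : Set (EuclideanSpace ℝ (Fin d) → ℝ) :=
  { f | Measurable f }

/-- The ρ-margin loss. -/
def phiRho (ρ t : ℝ) : ℝ := min 1 (max 0 (1 - t / ρ))


theorem stmt1 (d : ℕ) (hd : 1 ≤ d) (γ : ℝ) (hγ0 : 0 < γ) (hγ1 : γ < 1)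
    (H : Set (EuclideanSpace ℝ (Fin d) → ℝ))
    (x0 : EuclideanSpace ℝ (Fin d)) (hx0 : Distinguishing γ H x0)
    (f0 : EuclideanSpace ℝ (Fin d) → ℝ) (hf0 : f0 ∈ H) (hf00 : f0 x0 = 0)
    (φ : ℝ → ℝ) (hφ0 : ∀ t, 0 ≤ φ t) (hconv : ConvexOn ℝ Set.univ φ) :
    ¬ Calibrated H (marginLoss φ) (advLoss γ) := by
  intro hcal
  obtain ⟨hx0norm, ⟨f1, hf1H, hf1⟩, -⟩ := hx0
  haveI hne : Nonempty (Metric.closedBall x0 γ) :=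
    ⟨⟨x0, Metric.mem_closedBall_self hγ0.le⟩⟩
  haveI hHne : Nonempty H := ⟨⟨f0, hf0⟩⟩
  -- adversarial loss values are in [0,1]
  have hadv0 : ∀ (f : EuclideanSpace ℝ (Fin d) → ℝ) (y : ℝ), 0 ≤ advLoss γ f x0 y := by
    intro f y
    exact Real.iSup_nonneg fun x' => by split <;> norm_num
  have hadv1 : ∀ (f : EuclideanSpace ℝ (Fin d) → ℝ) (y : ℝ), advLoss γ f x0 y ≤ 1 := by
    intro f y
    exact Real.iSup_le (fun x' => by split <;> norm_num) one_pos.le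
  -- adversarial risk of f0 is 1
  have hadvf0 : ∀ y : ℝ, y * f0 x0 = 0 → advLoss γ f0 x0 y = 1 := by
    intro y hy
    refine le_antisymm (hadv1 f0 y) ?_
    have hbdd : BddAbove (Set.range fun x' : Metric.closedBall x0 γ =>
        (if y * f0 (x' : EuclideanSpace ℝ (Fin d)) ≤ 0 then (1:ℝ) else 0)) := by
      refine ⟨1, ?_⟩
      rintro a ⟨x', rfl⟩
      show (if y * f0 (x' : EuclideanSpace ℝ (Fin d)) ≤ 0 then (1:ℝ) else 0) ≤ 1
      split <;> norm_num
    have := le_ciSup hbdd (⟨x0, Metric.mem_closedBall_self hγ0.le⟩ : Metric.closedBall x0 γ)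
    simpa [advLoss, hy] using this
  -- f1 is positive on the ball
  have hf1pos : ∀ x' : Metric.closedBall x0 γ, 0 < f1 (x' : EuclideanSpace ℝ (Fin d)) := by
    intro x'
    have hbdd : BddBelow (Set.range fun x' : Metric.closedBall x0 γ =>
        f1 (x' : EuclideanSpace ℝ (Fin d))) := by
      by_contra hb
      rw [infBall, Real.iInf_of_not_bddBelow hb] at hf1
      exact lt_irrefl 0 hf1
    calc (0:ℝ) < infBall γ f1 x0 := hf1
      _ ≤ f1 (x' : EuclideanSpace ℝ (Fin d)) := ciInf_le hbdd x'
  have hadvf1 : advLoss γ f1 x0 1 = 0 := by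
    refine le_antisymm ?_ (hadv0 f1 1)
    refine Real.iSup_le (fun x' => ?_) le_rfl
    rw [if_neg]
    simpa using (hf1pos x').not_ge
  -- minimal margin risk equals φ 0
  have hriskf0 : innerRisk (marginLoss φ) f0 x0 (1/2) = φ 0 := by
    simp only [innerRisk, marginLoss, hf00]
    norm_num
    ring
  have hmargin_nonneg : ∀ f : H, 0 ≤ innerRisk (marginLoss φ) f.1 x0 (1/2) := by
    intro f
    have h1 := hφ0 (1 * f.1 x0)
    have h2 := hφ0 ((-1) * f.1 x0)
    simp only [innerRisk, marginLoss]
    nlinarith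
  have hmin_margin : minInnerRisk (marginLoss φ) H x0 (1/2) = φ 0 := by
    refine le_antisymm ?_ ?_
    · have hb : BddBelow (Set.range fun f : H => innerRisk (marginLoss φ) f.1 x0 (1/2)) := by
        refine ⟨0, ?_⟩
        rintro a ⟨f, rfl⟩
        exact hmargin_nonneg f
      have := ciInf_le hb (⟨f0, hf0⟩ : H)
      rw [hriskf0] at this
      exact this
    · refine le_ciInf fun f => ?_
      have hc := hconv.2 (Set.mem_univ (f.1 x0)) (Set.mem_univ (-f.1 x0))
        (by norm_num : (0:ℝ) ≤ 1/2) (by norm_num : (0:ℝ) ≤ 1/2) (by norm_num)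
      simp only [smul_eq_mul] at hc
      have harg : (1/2 : ℝ) * (f.1 x0) + (1/2) * (-f.1 x0) = 0 := by ring
      rw [harg] at hc
      simp only [innerRisk, marginLoss]
      calc φ 0 ≤ 1/2 * φ (f.1 x0) + 1/2 * φ (-f.1 x0) := hc
        _ = 1/2 * φ (1 * f.1 x0) + (1 - 1/2) * φ ((-1) * f.1 x0) := by
            norm_num
  -- minimal adversarial risk is at most 1/2
  have hadv_nonneg : ∀ f : H, 0 ≤ innerRisk (advLoss γ) f.1 x0 (1/2) := by
    intro f
    have h1 := hadv0 f.1 1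
    have h2 := hadv0 f.1 (-1)
    simp only [innerRisk]
    nlinarith
  have hmin_adv : minInnerRisk (advLoss γ) H x0 (1/2) ≤ 1/2 := by
    have hb : BddBelow (Set.range fun f : H => innerRisk (advLoss γ) f.1 x0 (1/2)) := by
      refine ⟨0, ?_⟩
      rintro a ⟨f, rfl⟩
      exact hadv_nonneg f
    have h1 := ciInf_le hb (⟨f1, hf1H⟩ : H)
    have h2 : innerRisk (advLoss γ) f1 x0 (1/2) ≤ 1/2 := by
      have := hadv1 f1 (-1)
      simp only [innerRisk, hadvf1]
      linarith
    exact le_trans h1 h2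
  -- apply calibration with ε = 1/2
  obtain ⟨δ, hδ, hcal'⟩ := hcal (1/2) (by norm_num) (1/2)
    (by constructor <;> norm_num) x0 hx0norm
  have hprem : innerRisk (marginLoss φ) f0 x0 (1/2) <
      minInnerRisk (marginLoss φ) H x0 (1/2) + δ := by
    rw [hriskf0, hmin_margin]; linarith
  have hconc := hcal' f0 hf0 hprem
  have hr0 : innerRisk (advLoss γ) f0 x0 (1/2) = 1 := by
    have h1 := hadvf0 1 (by rw [hf00]; ring)
    have h2 := hadvf0 (-1) (by rw [hf00]; ring)
    simp only [innerRisk, h1, h2]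
    norm_num
  rw [hr0] at hconc
  linarith

end
end

section
/- Let d ≥ 2. If a margin-based loss φ : ℝ → [0,∞) is convex, then φ is not H_lin-calibrated with respect to the adversarial 0/1 loss ℓ_γ. -/
open scoped RealInnerProductSpace

noncomputable section

variable {d : ℕ}

theorem stmt2 (d : ℕ) (hd : 2 ≤ d) (γ : ℝ) (hγ0 : 0 < γ) (hγ1 : γ < 1)
    (φ : ℝ → ℝ) (hφ0 : ∀ t, 0 ≤ φ t) (hconv : ConvexOn ℝ Set.univ φ) :
    ¬ Calibrated (Hlin d) (marginLoss φ) (advLoss γ) := by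
  intro hcal
  classical
  have h0d : 0 < d := by omega
  have h1d : 1 < d := by omega
  set i0 : Fin d := ⟨0, h0d⟩ with hi0
  set i1 : Fin d := ⟨1, h1d⟩ with hi1
  have hii : i0 ≠ i1 := by simp [hi0, hi1, Fin.ext_iff]
  set x : EuclideanSpace ℝ (Fin d) := EuclideanSpace.single i0 1 with hxdef
  set w : EuclideanSpace ℝ (Fin d) := EuclideanSpace.single i1 1 with hwdef
  have hxnorm : ‖x‖ = 1 := by simp [hxdef]
  have hwnorm : ‖w‖ = 1 := by simp [hwdef]
  set f0 : EuclideanSpace ℝ (Fin d) → ℝ := fun z => (inner ℝ w z : ℝ) with hf0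
  set f1 : EuclideanSpace ℝ (Fin d) → ℝ := fun z => (inner ℝ x z : ℝ) with hf1
  have hf0mem : f0 ∈ Hlin d := ⟨w, hwnorm, rfl⟩
  have hf1mem : f1 ∈ Hlin d := ⟨x, hxnorm, rfl⟩
  haveI hne : Nonempty (Metric.closedBall x γ) :=
    ⟨⟨x, Metric.mem_closedBall_self hγ0.le⟩⟩
  have hf0x : ∀ z : EuclideanSpace ℝ (Fin d), f0 z = z i1 := fun z => by
    simp [hf0, hwdef, EuclideanSpace.inner_single_left]
  have hf1x : ∀ z : EuclideanSpace ℝ (Fin d), f1 z = z i0 := fun z => by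
    simp [hf1, hxdef, EuclideanSpace.inner_single_left]
  -- bounded above by 1
  have hbdd : ∀ (f : EuclideanSpace ℝ (Fin d) → ℝ) (y : ℝ),
      BddAbove (Set.range fun x' : Metric.closedBall x γ =>
        (if y * f ↑x' ≤ 0 then (1:ℝ) else 0)) := by
    intro f y
    refine ⟨1, ?_⟩
    rintro _ ⟨i, rfl⟩
    dsimp
    split <;> norm_num
  have hadv_nonneg : ∀ (f : EuclideanSpace ℝ (Fin d) → ℝ) (y : ℝ),
      0 ≤ advLoss γ f x y := by
    intro f y
    rw [advLoss]
    refine le_trans ?_ (le_ciSup (hbdd f y) ⟨x, Metric.mem_closedBall_self hγ0.le⟩)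
    dsimp
    split <;> norm_num
  -- calibration with ε = 1/2
  obtain ⟨δ, hδ, hcal'⟩ := hcal (1/2) (by norm_num) (1/2) (by norm_num) x hxnorm.le
  -- φ-risk of f0 is φ 0
  have hx1 : x i1 = 0 := by simp [hxdef, EuclideanSpace.single_apply, hii.symm]
  have hrisk_phi : innerRisk (marginLoss φ) f0 x (1/2) = φ 0 := by
    simp only [innerRisk, marginLoss, hf0x, hx1]
    ring_nf
  -- minimal φ-risk is at least φ 0 by convexity
  haveI : Nonempty (Hlin d) := ⟨⟨f0, hf0mem⟩⟩
  have hmin_phi : φ 0 ≤ minInnerRisk (marginLoss φ) (Hlin d) x (1/2) := by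
    rw [minInnerRisk]
    refine le_ciInf ?_
    rintro ⟨f, w', hw', rfl⟩
    have hc := hconv.2 (Set.mem_univ ((inner ℝ w' x : ℝ))) (Set.mem_univ (-(inner ℝ w' x : ℝ)))
      (by norm_num : (0:ℝ) ≤ 1/2) (by norm_num : (0:ℝ) ≤ 1/2) (by norm_num)
    simp only [smul_eq_mul] at hc
    have heq : (1/2 : ℝ) * (inner ℝ w' x : ℝ) + (1/2) * (-(inner ℝ w' x : ℝ)) = 0 := by ring
    rw [heq] at hc
    simp only [innerRisk, marginLoss, one_mul, neg_one_mul]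
    linarith
  -- adversarial risk of f0 is ≥ 1
  have hmemA : x - γ • w ∈ Metric.closedBall x γ := by
    simp [Metric.mem_closedBall, dist_eq_norm, norm_smul, hwnorm, abs_of_pos hγ0]
  have hmemB : x + γ • w ∈ Metric.closedBall x γ := by
    simp [Metric.mem_closedBall, dist_eq_norm, norm_smul, hwnorm, abs_of_pos hγ0]
  have hw1 : w i1 = 1 := by simp [hwdef, EuclideanSpace.single_apply]
  have hcoordA : f0 (x - γ • w) = -γ := by
    rw [hf0x]
    simp [hx1, hw1]
  have hcoordB : f0 (x + γ • w) = γ := by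
    rw [hf0x]
    simp [hx1, hw1]
  have hadv0p : (1:ℝ) ≤ advLoss γ f0 x 1 := by
    rw [advLoss]
    refine le_trans ?_ (le_ciSup (hbdd f0 1) ⟨x - γ • w, hmemA⟩)
    dsimp
    rw [one_mul, hcoordA, if_pos (by linarith)]
  have hadv0m : (1:ℝ) ≤ advLoss γ f0 x (-1) := by
    rw [advLoss]
    refine le_trans ?_ (le_ciSup (hbdd f0 (-1)) ⟨x + γ • w, hmemB⟩)
    dsimp
    rw [hcoordB, if_pos (by linarith)]
  -- adversarial risk of f1 is ≤ 1/2
  have hball_pos : ∀ z : Metric.closedBall x γ, 0 < f1 (z : EuclideanSpace ℝ (Fin d)) := by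
    rintro ⟨z, hz⟩
    have h1 : |(inner ℝ x (z - x) : ℝ)| ≤ ‖x‖ * ‖z - x‖ := abs_real_inner_le_norm x (z - x)
    rw [hxnorm, one_mul] at h1
    have h2 : ‖z - x‖ ≤ γ := by
      rw [← dist_eq_norm]
      exact Metric.mem_closedBall.mp hz
    have h3 : (inner ℝ x (z - x) : ℝ) = f1 z - f1 x := by
      rw [hf1]
      simp [inner_sub_right]
    have h4 : f1 x = 1 := by rw [hf1x]; simp [hxdef, EuclideanSpace.single_apply]
    rw [h3, h4] at h1
    have := abs_le.mp (h1.trans h2)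
    dsimp only
    linarith [this.1]
  have hs1 : advLoss γ f1 x 1 ≤ 0 := by
    rw [advLoss]
    refine ciSup_le ?_
    intro z
    rw [one_mul, if_neg (by push_neg; exact hball_pos z)]
  have hs2 : advLoss γ f1 x (-1) ≤ 1 := by
    rw [advLoss]
    refine ciSup_le ?_
    intro z
    split <;> norm_num
  have hf1risk : innerRisk (advLoss γ) f1 x (1/2) ≤ 1/2 := by
    simp only [innerRisk]
    linarith
  -- minimal adversarial risk ≤ 1/2
  have hbddbelow : BddBelow (Set.range fun f : Hlin d =>
      innerRisk (advLoss γ) f x (1/2)) := by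
    refine ⟨0, ?_⟩
    rintro _ ⟨f, rfl⟩
    simp only [innerRisk]
    have h1 := hadv_nonneg f 1
    have h2 := hadv_nonneg f (-1)
    linarith
  have hmin_adv : minInnerRisk (advLoss γ) (Hlin d) x (1/2) ≤ 1/2 := by
    rw [minInnerRisk]
    exact le_trans (ciInf_le hbddbelow ⟨f1, hf1mem⟩) hf1risk
  -- conclude
  have hkey := hcal' f0 hf0mem (by rw [hrisk_phi]; linarith)
  have hge : (1:ℝ) ≤ innerRisk (advLoss γ) f0 x (1/2) := by
    simp only [innerRisk]
    linarith
  linarith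

end
end

section
/- Let g : ℝ → ℝ be a non-decreasing continuous function and G ≥ 0 satisfy g(−γ) + G > 0 and g(γ) − G < 0. If a margin-based loss φ : ℝ → [0,∞) is convex, then φ is not H_g-calibrated with respect to the adversarial 0/1 loss ℓ_γ. In particular, if G > γ, then φ is not H_relu-calibrated with respect to ℓ_γ. -/
open scoped RealInnerProductSpace

noncomputable section

variable {d : ℕ}

lemma key_notcal {d : ℕ} (hd : 1 ≤ d) {γ : ℝ} (hγ0 : 0 < γ) {g : ℝ → ℝ} (hgmono : Monotone g)
    {G : ℝ} (hg1 : 0 < g (-γ) + G) (hg2 : g γ - G < 0)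
    {φ : ℝ → ℝ} (hconv : ConvexOn ℝ Set.univ φ) :
    ¬ Calibrated (Hg d g G) (marginLoss φ) (advLoss γ) := by
  have hgg : g (-γ) ≤ g γ := hgmono (by linarith)
  have hG : 0 < G := by linarith
  set w : EuclideanSpace ℝ (Fin d) := EuclideanSpace.single ⟨0, hd⟩ (1:ℝ) with hw_def
  have hw : ‖w‖ = 1 := by simp [hw_def, EuclideanSpace.norm_single]
  haveI hne : Nonempty (Metric.closedBall (0:EuclideanSpace ℝ (Fin d)) γ) :=
    Set.Nonempty.to_subtype (Metric.nonempty_closedBall.mpr hγ0.le)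
  have hinner : ∀ x' ∈ Metric.closedBall (0:EuclideanSpace ℝ (Fin d)) γ,
      -γ ≤ (inner ℝ w x' : ℝ) ∧ (inner ℝ w x' : ℝ) ≤ γ := by
    intro x' hx'
    have hx'' : ‖x'‖ ≤ γ := by simpa [dist_zero_right] using hx'
    have h1 : |(inner ℝ w x' : ℝ)| ≤ ‖x'‖ := by
      calc |(inner ℝ w x' : ℝ)| ≤ ‖w‖ * ‖x'‖ := abs_real_inner_le_norm w x'
        _ = ‖x'‖ := by rw [hw, one_mul]
    exact abs_le.mp (h1.trans hx'')
  intro hcal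
  obtain ⟨δ, hδ, hf⟩ := hcal (1/4) (by norm_num) (1/2) ⟨by norm_num, by norm_num⟩ 0 (by simp)
  set f₀ : EuclideanSpace ℝ (Fin d) → ℝ := fun x => g (inner ℝ w x : ℝ) + (- g 0) with hf₀def
  have hgm1 : g (-γ) ≤ g 0 := hgmono (by linarith)
  have hgm2 : g 0 ≤ g γ := hgmono (by linarith)
  have hb0 : |(- g 0)| ≤ G := by
    rw [abs_le]; constructor <;> linarith
  have hf₀mem : f₀ ∈ Hg d g G := ⟨w, - g 0, hw, hb0, rfl⟩
  haveI : Nonempty ↑(Hg d g G) := ⟨⟨f₀, hf₀mem⟩⟩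
  have hf₀0 : f₀ 0 = 0 := by simp [hf₀def]
  -- lower bound on the minimal margin risk
  have hmin_ge : φ 0 ≤ minInnerRisk (marginLoss φ) (Hg d g G) 0 (1/2) := by
    apply le_ciInf
    rintro ⟨f, hfH⟩
    have hc := hconv.2 (Set.mem_univ (f 0)) (Set.mem_univ (-(f 0)))
      (by norm_num : (0:ℝ) ≤ 1/2) (by norm_num : (0:ℝ) ≤ 1/2) (by norm_num)
    simp only [smul_eq_mul] at hc
    have h0 : (1/2 : ℝ) * f 0 + (1/2) * (-(f 0)) = 0 := by ring
    rw [h0] at hc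
    simp only [innerRisk, marginLoss, one_mul, neg_one_mul]
    linarith
  have hrisk₀ : innerRisk (marginLoss φ) f₀ 0 (1/2) = φ 0 := by
    simp only [innerRisk, marginLoss, hf₀0, mul_zero, one_mul, neg_one_mul, neg_zero]
    ring
  have hadv := hf f₀ hf₀mem (by rw [hrisk₀]; linarith)
  -- the strictly positive hypothesis
  set fp : EuclideanSpace ℝ (Fin d) → ℝ := fun x => g (inner ℝ w x : ℝ) + G with hfpdef
  have hfpmem : fp ∈ Hg d g G := ⟨w, G, hw, by rw [abs_of_pos hG], rfl⟩
  have hfp_pos : ∀ x' ∈ Metric.closedBall (0:EuclideanSpace ℝ (Fin d)) γ, 0 < fp x' := by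
    intro x' hx'
    have h := hgmono (hinner x' hx').1
    simp only [hfpdef]
    linarith
  have hadv_fp : innerRisk (advLoss γ) fp 0 (1/2) = 1/2 := by
    have hA : advLoss γ fp 0 1 = 0 := by
      unfold advLoss
      have he : (fun x' : Metric.closedBall (0:EuclideanSpace ℝ (Fin d)) γ =>
          if (1:ℝ) * fp ↑x' ≤ 0 then (1:ℝ) else 0) = fun _ => 0 := by
        funext x'
        rw [if_neg]
        push_neg
        have := hfp_pos x' x'.2
        linarith
      rw [he, ciSup_const]
    have hB : advLoss γ fp 0 (-1) = 1 := by
      unfold advLoss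
      have he : (fun x' : Metric.closedBall (0:EuclideanSpace ℝ (Fin d)) γ =>
          if (-1:ℝ) * fp ↑x' ≤ 0 then (1:ℝ) else 0) = fun _ => 1 := by
        funext x'
        rw [if_pos]
        have := hfp_pos x' x'.2
        linarith
      rw [he, ciSup_const]
    simp only [innerRisk, hA, hB]
    norm_num
  have hmin_adv : minInnerRisk (advLoss γ) (Hg d g G) 0 (1/2) ≤ 1/2 := by
    have hb : BddBelow (Set.range fun f : ↥(Hg d g G) => innerRisk (advLoss γ) (↑f : EuclideanSpace ℝ (Fin d) → ℝ) 0 (1/2)) := by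
      refine ⟨0, ?_⟩
      rintro _ ⟨⟨f, hfH⟩, rfl⟩
      have h1 : 0 ≤ advLoss γ f 0 1 :=
        Real.iSup_nonneg (fun x' => by split <;> norm_num)
      have h2 : 0 ≤ advLoss γ f 0 (-1) :=
        Real.iSup_nonneg (fun x' => by split <;> norm_num)
      simp only [innerRisk]
      linarith
    have hle := ciInf_le hb (⟨fp, hfpmem⟩ : ↥(Hg d g G))
    exact le_trans hle hadv_fp.le
  have hcenter : (0:EuclideanSpace ℝ (Fin d)) ∈ Metric.closedBall (0:EuclideanSpace ℝ (Fin d)) γ :=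
    Metric.mem_closedBall_self hγ0.le
  have hbdd : ∀ (f : EuclideanSpace ℝ (Fin d) → ℝ) (y : ℝ), BddAbove (Set.range
      fun x' : Metric.closedBall (0:EuclideanSpace ℝ (Fin d)) γ =>
        if y * f ↑x' ≤ 0 then (1:ℝ) else 0) :=
    fun f y => ⟨1, by rintro _ ⟨x', rfl⟩; dsimp only; split <;> norm_num⟩
  have hA0 : (1:ℝ) ≤ advLoss γ f₀ 0 1 := by
    have h := le_ciSup (hbdd f₀ 1)
      (⟨0, hcenter⟩ : Metric.closedBall (0:EuclideanSpace ℝ (Fin d)) γ)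
    simpa [advLoss, hf₀0] using h
  have hB0 : (1:ℝ) ≤ advLoss γ f₀ 0 (-1) := by
    have h := le_ciSup (hbdd f₀ (-1))
      (⟨0, hcenter⟩ : Metric.closedBall (0:EuclideanSpace ℝ (Fin d)) γ)
    simpa [advLoss, hf₀0] using h
  have hge1 : (1:ℝ) ≤ innerRisk (advLoss γ) f₀ 0 (1/2) := by
    simp only [innerRisk]
    linarith
  linarith

theorem stmt3 (d : ℕ) (hd : 1 ≤ d) (γ : ℝ) (hγ0 : 0 < γ) (hγ1 : γ < 1)
    (g : ℝ → ℝ) (hgmono : Monotone g) (hgcont : Continuous g)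
    (G : ℝ) (hG : 0 ≤ G) (hg1 : 0 < g (-γ) + G) (hg2 : g γ - G < 0)
    (φ : ℝ → ℝ) (hφ0 : ∀ t, 0 ≤ φ t) (hconv : ConvexOn ℝ Set.univ φ) :
    ¬ Calibrated (Hg d g G) (marginLoss φ) (advLoss γ) ∧
    (γ < G → ¬ Calibrated (Hrelu d G) (marginLoss φ) (advLoss γ)) := by
  refine ⟨key_notcal hd hγ0 hgmono hg1 hg2 hconv, fun hγG => ?_⟩
  have h1 : 0 < max (-γ) 0 + G := by
    rw [max_eq_right (by linarith : -γ ≤ 0)]; linarith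
  have h2 : max γ 0 - G < 0 := by
    rw [max_eq_left hγ0.le]; linarith
  exact key_notcal hd hγ0 (monotone_id.max monotone_const) h1 h2 hconv

end
end

section
/- If a margin-based loss φ : ℝ → [0,∞) is convex, then for every n ≥ 1, Λ > 0 and W > 0, φ is not H_NN-calibrated with respect to the adversarial 0/1 loss ℓ_γ; moreover φ is not H_all-calibrated with respect to ℓ_γ. -/
open scoped RealInnerProductSpace

noncomputable section

variable {d : ℕ}

lemma not_cal_aux {d : ℕ} (γ : ℝ) (hγ0 : 0 < γ)
    (φ : ℝ → ℝ) (hconv : ConvexOn ℝ Set.univ φ)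
    (H : Set (EuclideanSpace ℝ (Fin d) → ℝ))
    (h0 : (fun _ => (0:ℝ)) ∈ H)
    (x : EuclideanSpace ℝ (Fin d)) (hx : ‖x‖ ≤ 1)
    (f : EuclideanSpace ℝ (Fin d) → ℝ) (hf : f ∈ H)
    (hfpos : ∀ x' ∈ Metric.closedBall x γ, 0 < f x') :
    ¬ Calibrated H (marginLoss φ) (advLoss γ) := by
  intro hcal
  have hball : (Metric.closedBall x γ).Nonempty := Metric.nonempty_closedBall.2 hγ0.le
  haveI : Nonempty (Metric.closedBall x γ) := hball.to_subtype
  haveI : Nonempty H := ⟨⟨_, h0⟩⟩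
  obtain ⟨δ, hδ, hδ'⟩ := hcal (1/2) (by norm_num) (1/2) ⟨by norm_num, by norm_num⟩ x hx
  -- the zero function nearly minimizes the margin risk at η = 1/2
  have hz : innerRisk (marginLoss φ) (fun _ => 0) x (1/2) = φ 0 := by
    simp [innerRisk, marginLoss]
    ring
  have hmin1 : φ 0 ≤ minInnerRisk (marginLoss φ) H x (1/2) := by
    apply le_ciInf
    intro g
    have h := hconv.2 (Set.mem_univ ((g : EuclideanSpace ℝ (Fin d) → ℝ) x))
      (Set.mem_univ (-(g : EuclideanSpace ℝ (Fin d) → ℝ) x))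
      (by norm_num : (0:ℝ) ≤ 1/2) (by norm_num : (0:ℝ) ≤ 1/2) (by norm_num)
    simp only [smul_eq_mul] at h
    have harg : (1/2 : ℝ) * (g : EuclideanSpace ℝ (Fin d) → ℝ) x
        + 1/2 * (-(g : EuclideanSpace ℝ (Fin d) → ℝ) x) = 0 := by ring
    rw [harg] at h
    simp only [innerRisk, marginLoss, one_mul, neg_one_mul]
    linarith
  have hzin : innerRisk (marginLoss φ) (fun _ => 0) x (1/2)
      < minInnerRisk (marginLoss φ) H x (1/2) + δ := by
    rw [hz]; linarith
  have hmain := hδ' (fun _ => 0) h0 hzin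
  -- compute adversarial risk of zero function: equals 1
  have hadv0 : ∀ y : ℝ, advLoss γ (fun _ => (0:ℝ)) x y = 1 := by
    intro y
    have : (fun x' : Metric.closedBall x γ =>
        (if y * (fun _ : EuclideanSpace ℝ (Fin d) => (0:ℝ)) (x' : EuclideanSpace ℝ (Fin d)) ≤ 0
          then (1:ℝ) else 0)) = fun _ => (1:ℝ) := by
      funext x'
      rw [if_pos]
      simp
    rw [advLoss, this, ciSup_const]
  have hzadv : innerRisk (advLoss γ) (fun _ => 0) x (1/2) = 1 := by
    rw [innerRisk, hadv0, hadv0]; ring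
  -- adversarial risk of f: equals 1/2
  have hadvf1 : advLoss γ f x 1 = 0 := by
    have : (fun x' : Metric.closedBall x γ =>
        (if (1:ℝ) * f (x' : EuclideanSpace ℝ (Fin d)) ≤ 0 then (1:ℝ) else 0)) = fun _ => (0:ℝ) := by
      funext x'
      rw [if_neg]
      rw [one_mul, not_le]
      exact hfpos _ x'.2
    rw [advLoss, this, ciSup_const]
  have hadvf2 : advLoss γ f x (-1) = 1 := by
    have : (fun x' : Metric.closedBall x γ =>
        (if (-1:ℝ) * f (x' : EuclideanSpace ℝ (Fin d)) ≤ 0 then (1:ℝ) else 0)) = fun _ => (1:ℝ) := by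
      funext x'
      rw [if_pos]
      have := hfpos _ x'.2
      nlinarith
    rw [advLoss, this, ciSup_const]
  have hfadv : innerRisk (advLoss γ) f x (1/2) = 1/2 := by
    rw [innerRisk, hadvf1, hadvf2]; ring
  -- min adversarial risk ≤ 1/2
  have hnonneg : ∀ g : H, (0:ℝ) ≤ innerRisk (advLoss γ) (g : EuclideanSpace ℝ (Fin d) → ℝ) x (1/2) := by
    intro g
    have h1 : ∀ y : ℝ, 0 ≤ advLoss γ (g : EuclideanSpace ℝ (Fin d) → ℝ) x y := by
      intro y
      apply Real.iSup_nonneg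
      intro x'
      positivity
    have := h1 1
    have := h1 (-1)
    rw [innerRisk]
    nlinarith
  have hmin2 : minInnerRisk (advLoss γ) H x (1/2) ≤ 1/2 := by
    rw [minInnerRisk]
    calc (⨅ g : H, innerRisk (advLoss γ) (g : EuclideanSpace ℝ (Fin d) → ℝ) x (1/2))
        ≤ innerRisk (advLoss γ) f x (1/2) := by
          exact ciInf_le ⟨0, by rintro _ ⟨g, rfl⟩; exact hnonneg g⟩ (⟨f, hf⟩ : H)
      _ = 1/2 := hfadv
  rw [hzadv] at hmain
  linarith

theorem stmt4 (d : ℕ) (hd : 1 ≤ d) (γ : ℝ) (hγ0 : 0 < γ) (hγ1 : γ < 1)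
    (φ : ℝ → ℝ) (hφ0 : ∀ t, 0 ≤ φ t) (hconv : ConvexOn ℝ Set.univ φ) :
    (∀ n : ℕ, 1 ≤ n → ∀ Λ W : ℝ, 0 < Λ → 0 < W →
      ¬ Calibrated (Hnn d n Λ W) (marginLoss φ) (advLoss γ)) ∧
    ¬ Calibrated (Hall d) (marginLoss φ) (advLoss γ) := by
  constructor
  · intro n hn Λ W hΛ hW
    set i0 : Fin n := ⟨0, hn⟩
    set e0 : EuclideanSpace ℝ (Fin d) := EuclideanSpace.single ⟨0, hd⟩ 1 with he0
    have hne : ‖e0‖ = 1 := by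
      rw [he0, EuclideanSpace.norm_single]; norm_num
    set f : EuclideanSpace ℝ (Fin d) → ℝ :=
      fun x => Λ * max (inner ℝ (W • e0) x : ℝ) 0 with hfdef
    have h0 : (fun _ => (0:ℝ)) ∈ Hnn d n Λ W := by
      refine ⟨fun _ => 0, fun _ => 0, ?_, ?_, ?_⟩
      · simp [hΛ.le]
      · intro j; simp [hW.le]
      · funext x; simp
    have hf : f ∈ Hnn d n Λ W := by
      refine ⟨fun j => if j = i0 then Λ else 0, fun _ => W • e0, ?_, ?_, ?_⟩
      · have : ∀ j : Fin n, |if j = i0 then Λ else 0| = if j = i0 then Λ else 0 := by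
          intro j; split <;> simp [abs_of_pos hΛ]
        rw [Finset.sum_congr rfl (fun j _ => this j), Finset.sum_ite_eq' Finset.univ i0 (fun _ => Λ)]
        simp
      · intro j; rw [norm_smul, hne]; simp [abs_of_pos hW]
      · funext x
        rw [hfdef]
        rw [show (∑ j : Fin n, (if j = i0 then Λ else 0) * max (inner ℝ ((fun _ : Fin n => W • e0) j) x : ℝ) 0)
            = ∑ j : Fin n, (if j = i0 then Λ * max (inner ℝ (W • e0) x : ℝ) 0 else 0) from
          Finset.sum_congr rfl (fun j _ => by split <;> simp)]
        rw [Finset.sum_ite_eq' Finset.univ i0 (fun _ => Λ * max (inner ℝ (W • e0) x : ℝ) 0)]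
        simp
    have hfpos : ∀ x' ∈ Metric.closedBall e0 γ, 0 < f x' := by
      intro x' hx'
      have hinner : (1:ℝ) - γ ≤ (inner ℝ e0 x' : ℝ) := by
        have h1 : (inner ℝ e0 e0 : ℝ) = 1 := by
          rw [real_inner_self_eq_norm_sq, hne]; norm_num
        have h2 : |(inner ℝ e0 (x' - e0) : ℝ)| ≤ ‖e0‖ * ‖x' - e0‖ := abs_real_inner_le_norm _ _
        have h3 : ‖x' - e0‖ ≤ γ := by
          rw [← dist_eq_norm]; exact Metric.mem_closedBall.1 hx'
        rw [inner_sub_right, h1, hne, one_mul] at h2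
        have := abs_le.1 (h2.trans h3)
        linarith [this.1]
      have hc : (0:ℝ) < (inner ℝ e0 x' : ℝ) := by linarith
      have hWc : (0:ℝ) < W * (inner ℝ e0 x' : ℝ) := mul_pos hW hc
      rw [hfdef]
      have h5 : (inner ℝ (W • e0) x' : ℝ) = W * (inner ℝ e0 x' : ℝ) := real_inner_smul_left _ _ _
      simp only [h5]
      exact mul_pos hΛ (lt_of_lt_of_le hWc (le_max_left _ _))
    exact not_cal_aux γ hγ0 φ hconv (Hnn d n Λ W) h0 e0 (le_of_eq hne) f hf hfpos
  · have h0 : (fun _ => (0:ℝ)) ∈ Hall d := measurable_const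
    have hf : (fun _ => (1:ℝ)) ∈ Hall d := measurable_const
    refine not_cal_aux γ hγ0 φ hconv (Hall d) h0 0 (by simp) (fun _ => 1) hf ?_
    intro x' _; norm_num


end
end

section
/- Let d ≥ 2 and let φ : ℝ → [0,∞) be a convex, non-increasing margin-based loss. Then the supremum-based surrogate φ̃(f,x,y) = sup_{x' : ‖x−x'‖ ≤ γ} φ(y·f(x')) is not H_lin-calibrated with respect to the adversarial 0/1 loss ℓ_γ. -/
open scoped RealInnerProductSpace

noncomputable section

variable {d : ℕ}

section MyAux

variable {d : ℕ}

lemma my_supLoss_bound (γ : ℝ) {φ : ℝ → ℝ} (hanti : Antitone φ)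
    (w x : EuclideanSpace ℝ (Fin d)) (hw : ‖w‖ = 1) {y : ℝ} (hy : |y| = 1)
    (x' : EuclideanSpace ℝ (Fin d)) (hx' : x' ∈ Metric.closedBall x γ) :
    φ (y * ⟪w, x'⟫) ≤ φ (y * ⟪w, x⟫ - γ) := by
  apply hanti
  have h1 : |⟪w, x' - x⟫| ≤ γ := by
    calc |⟪w, x' - x⟫| ≤ ‖w‖ * ‖x' - x‖ := abs_real_inner_le_norm w (x' - x)
    _ = ‖x' - x‖ := by rw [hw, one_mul]
    _ ≤ γ := by rw [← dist_eq_norm]; exact Metric.mem_closedBall.mp hx'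
  have h2 : ⟪w, x'⟫ = ⟪w, x⟫ + ⟪w, x' - x⟫ := by rw [inner_sub_right]; ring
  have h3 : |y * ⟪w, x' - x⟫| ≤ γ := by rw [abs_mul, hy, one_mul]; exact h1
  have h4 := (abs_le.mp h3).1
  rw [h2, mul_add]; linarith

lemma my_supLoss_lin (γ : ℝ) (hγ : 0 ≤ γ) {φ : ℝ → ℝ} (hanti : Antitone φ)
    (w x : EuclideanSpace ℝ (Fin d)) (hw : ‖w‖ = 1) {y : ℝ} (hy : |y| = 1) :
    supLoss γ φ (fun z => ⟪w, z⟫) x y = φ (y * ⟪w, x⟫ - γ) := by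
  haveI : Nonempty ↥(Metric.closedBall x γ) := ((Metric.nonempty_closedBall.mpr hγ)).to_subtype
  have hbdd : BddAbove (Set.range fun x' : Metric.closedBall x γ => φ (y * ⟪w, (x' : EuclideanSpace ℝ (Fin d))⟫)) :=
    ⟨φ (y * ⟪w, x⟫ - γ), by
      rintro _ ⟨⟨x', hx'⟩, rfl⟩
      exact my_supLoss_bound γ hanti w x hw hy x' hx'⟩
  apply le_antisymm
  · exact ciSup_le fun ⟨x', hx'⟩ => my_supLoss_bound γ hanti w x hw hy x' hx'
  · have hmem : x - (y * γ) • w ∈ Metric.closedBall x γ := by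
      rw [Metric.mem_closedBall, dist_eq_norm]
      have : x - (x - (y * γ) • w) = (y * γ) • w := by abel
      rw [show x - (y * γ) • w - x = -((y * γ) • w) by abel]
      rw [norm_neg, norm_smul, hw, mul_one, Real.norm_eq_abs, abs_mul, hy, one_mul,
        abs_of_nonneg hγ]
    have hy2 : y * y = 1 := by
      have := abs_mul_abs_self y
      rw [hy] at this; linarith
    have hval : y * ⟪w, x - (y * γ) • w⟫ = y * ⟪w, x⟫ - γ := by
      rw [inner_sub_right, real_inner_smul_right, real_inner_self_eq_norm_sq, hw]
      ring_nf
      nlinarith [hy2]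
    calc φ (y * ⟪w, x⟫ - γ) = φ (y * ⟪w, (⟨x - (y * γ) • w, hmem⟩ : Metric.closedBall x γ)⟫) := by
          rw [hval]
    _ ≤ _ := le_ciSup hbdd ⟨x - (y * γ) • w, hmem⟩

lemma my_advLoss_nonneg (γ : ℝ) (f : EuclideanSpace ℝ (Fin d) → ℝ)
    (x : EuclideanSpace ℝ (Fin d)) (y : ℝ) : 0 ≤ advLoss γ f x y :=
  Real.iSup_nonneg fun _ => by split <;> norm_num

lemma my_advLoss_eq_one (γ : ℝ) (f : EuclideanSpace ℝ (Fin d) → ℝ)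
    (x : EuclideanSpace ℝ (Fin d)) (y : ℝ) (x' : EuclideanSpace ℝ (Fin d))
    (hx' : x' ∈ Metric.closedBall x γ) (h : y * f x' ≤ 0) :
    advLoss γ f x y = 1 := by
  have hbdd : BddAbove (Set.range fun x'' : Metric.closedBall x γ =>
      (if y * f ↑x'' ≤ 0 then (1:ℝ) else 0)) :=
    ⟨1, by rintro _ ⟨i, rfl⟩; by_cases h' : y * f ↑i ≤ 0 <;> simp [h']⟩
  haveI : Nonempty ↥(Metric.closedBall x γ) := ⟨⟨x', hx'⟩⟩
  apply le_antisymm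
  · exact ciSup_le fun i => by by_cases h' : y * f ↑i ≤ 0 <;> simp [h']
  · have := le_ciSup hbdd (⟨x', hx'⟩ : Metric.closedBall x γ)
    simpa [h, advLoss] using this

lemma my_advLoss_eq_zero (γ : ℝ) (hγ : 0 ≤ γ) (f : EuclideanSpace ℝ (Fin d) → ℝ)
    (x : EuclideanSpace ℝ (Fin d)) (y : ℝ)
    (h : ∀ x' ∈ Metric.closedBall x γ, ¬ (y * f x' ≤ 0)) :
    advLoss γ f x y = 0 := by
  haveI : Nonempty ↥(Metric.closedBall x γ) :=
    ((Metric.nonempty_closedBall.mpr hγ)).to_subtype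
  unfold advLoss
  rw [show (fun x' : Metric.closedBall x γ => (if y * f ↑x' ≤ 0 then (1:ℝ) else 0)) =
      fun _ => (0:ℝ) from funext fun ⟨x', hx'⟩ => if_neg (h x' hx')]
  exact ciSup_const

end MyAux

theorem stmt5 (d : ℕ) (hd : 2 ≤ d) (γ : ℝ) (hγ0 : 0 < γ) (hγ1 : γ < 1)
    (φ : ℝ → ℝ) (hφ0 : ∀ t, 0 ≤ φ t) (hconv : ConvexOn ℝ Set.univ φ)
    (hanti : Antitone φ) :
    ¬ Calibrated (Hlin d) (supLoss γ φ) (advLoss γ) := by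
  intro hcal
  have hi0 : (0 : ℕ) < d := by omega
  have hi1 : (1 : ℕ) < d := by omega
  set i0 : Fin d := ⟨0, hi0⟩ with hi0def
  set i1 : Fin d := ⟨1, hi1⟩ with hi1def
  set x : EuclideanSpace ℝ (Fin d) := EuclideanSpace.single i0 1 with hxdef
  set w : EuclideanSpace ℝ (Fin d) := EuclideanSpace.single i1 1 with hwdef
  have hwn : ‖w‖ = 1 := by rw [hwdef, EuclideanSpace.norm_single]; norm_num
  have hxn : ‖x‖ = 1 := by rw [hxdef, EuclideanSpace.norm_single]; norm_num
  have hwx : ⟪w, x⟫ = 0 := by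
    rw [hwdef, hxdef, EuclideanSpace.inner_single_left]
    simp [EuclideanSpace.single_apply, hi0def, hi1def, Fin.ext_iff]
  have hww : ⟪w, w⟫ = 1 := by rw [real_inner_self_eq_norm_sq, hwn]; norm_num
  have hxx : ⟪x, x⟫ = 1 := by rw [real_inner_self_eq_norm_sq, hxn]; norm_num
  have h1abs : |(1:ℝ)| = 1 := by norm_num
  have hm1abs : |(-1:ℝ)| = 1 := by norm_num
  have hf : (fun z : EuclideanSpace ℝ (Fin d) => ⟪w, z⟫) ∈ Hlin d := ⟨w, hwn, rfl⟩
  have hg : (fun z : EuclideanSpace ℝ (Fin d) => ⟪x, z⟫) ∈ Hlin d := ⟨x, hxn, rfl⟩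
  haveI : Nonempty ↥(Hlin d) := ⟨⟨_, hf⟩⟩
  obtain ⟨δ, hδ0, hcal'⟩ := hcal (1/4) (by norm_num) (1/2) (by constructor <;> norm_num) x hxn.le
  -- lower bound on the minimal surrogate risk
  have hmin1 : φ (-γ) ≤ minInnerRisk (supLoss γ φ) (Hlin d) x (1/2) := by
    apply le_ciInf
    rintro ⟨f', w', hw', rfl⟩
    have e1 := my_supLoss_lin γ hγ0.le hanti w' x hw' h1abs
    have e2 := my_supLoss_lin γ hγ0.le hanti w' x hw' hm1abs
    unfold innerRisk
    rw [e1, e2]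
    have hc := hconv.2 (Set.mem_univ (1 * ⟪w', x⟫ - γ)) (Set.mem_univ (-1 * ⟪w', x⟫ - γ))
      (by norm_num : (0:ℝ) ≤ 1/2) (by norm_num : (0:ℝ) ≤ 1/2) (by norm_num)
    have hmid : (1/2 : ℝ) • (1 * ⟪w', x⟫ - γ) + (1/2 : ℝ) • (-1 * ⟪w', x⟫ - γ) = -γ := by
      simp only [smul_eq_mul]; ring
    rw [hmid] at hc
    simp only [smul_eq_mul] at hc
    linarith
  -- the surrogate risk of f is exactly φ(-γ)
  have hriskf : innerRisk (supLoss γ φ) (fun z => ⟪w, z⟫) x (1/2) = φ (-γ) := by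
    unfold innerRisk
    rw [my_supLoss_lin γ hγ0.le hanti w x hwn h1abs,
      my_supLoss_lin γ hγ0.le hanti w x hwn hm1abs, hwx]
    ring_nf
  have hnear : innerRisk (supLoss γ φ) (fun z => ⟪w, z⟫) x (1/2)
      < minInnerRisk (supLoss γ φ) (Hlin d) x (1/2) + δ := by
    rw [hriskf]; linarith
  have hconc := hcal' _ hf hnear
  -- adversarial risk of f is 1
  have hadvf1 : advLoss γ (fun z : EuclideanSpace ℝ (Fin d) => ⟪w, z⟫) x 1 = 1 := by
    apply my_advLoss_eq_one γ _ x 1 (x - γ • w)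
    · rw [Metric.mem_closedBall, dist_eq_norm]
      rw [show x - γ • w - x = -(γ • w) by abel]
      rw [norm_neg, norm_smul, hwn, mul_one, Real.norm_eq_abs, abs_of_nonneg hγ0.le]
    · rw [inner_sub_right, real_inner_smul_right, hwx, hww]
      simp
      linarith
  have hadvfm1 : advLoss γ (fun z : EuclideanSpace ℝ (Fin d) => ⟪w, z⟫) x (-1) = 1 := by
    apply my_advLoss_eq_one γ _ x (-1) (x + γ • w)
    · rw [Metric.mem_closedBall, dist_eq_norm]
      rw [show x + γ • w - x = γ • w by abel]
      rw [ norm_smul, hwn, mul_one, Real.norm_eq_abs, abs_of_nonneg hγ0.le]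
    · rw [inner_add_right, real_inner_smul_right, hwx, hww]
      simp
      linarith
  -- adversarial risk of g is 1/2
  have hadvg1 : advLoss γ (fun z : EuclideanSpace ℝ (Fin d) => ⟪x, z⟫) x 1 = 0 := by
    apply my_advLoss_eq_zero γ hγ0.le _ x 1
    intro x' hx'
    simp only [one_mul, not_le]
    have h1 : |⟪x, x' - x⟫| ≤ γ := by
      calc |⟪x, x' - x⟫| ≤ ‖x‖ * ‖x' - x‖ := abs_real_inner_le_norm x (x' - x)
      _ = ‖x' - x‖ := by rw [hxn, one_mul]
      _ ≤ γ := by rw [← dist_eq_norm]; exact Metric.mem_closedBall.mp hx'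
    have h2 : ⟪x, x'⟫ = ⟪x, x⟫ + ⟪x, x' - x⟫ := by rw [inner_sub_right]; ring
    have h3 := (abs_le.mp h1).1
    rw [h2, hxx]
    linarith
  have hadvgm1 : advLoss γ (fun z : EuclideanSpace ℝ (Fin d) => ⟪x, z⟫) x (-1) = 1 := by
    apply my_advLoss_eq_one γ _ x (-1) x
    · exact Metric.mem_closedBall_self hγ0.le
    · rw [hxx]; norm_num
  have hminle : minInnerRisk (advLoss γ) (Hlin d) x (1/2) ≤ 1/2 := by
    have hbb : BddBelow (Set.range fun f' : ↥(Hlin d) =>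
        innerRisk (advLoss γ) ↑f' x (1/2)) := by
      refine ⟨0, ?_⟩
      rintro _ ⟨f', rfl⟩
      unfold innerRisk
      have n1 := my_advLoss_nonneg γ (↑f') x 1
      have n2 := my_advLoss_nonneg γ (↑f') x (-1)
      nlinarith
    calc minInnerRisk (advLoss γ) (Hlin d) x (1/2)
        ≤ innerRisk (advLoss γ) (fun z : EuclideanSpace ℝ (Fin d) => ⟪x, z⟫) x (1/2) :=
          ciInf_le hbb (⟨_, hg⟩ : ↥(Hlin d))
    _ = 1/2 := by unfold innerRisk; rw [hadvg1, hadvgm1]; norm_num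
  have hriskadvf : innerRisk (advLoss γ) (fun z : EuclideanSpace ℝ (Fin d) => ⟪w, z⟫) x (1/2) = 1 := by
    unfold innerRisk; rw [hadvf1, hadvfm1]; norm_num
  rw [hriskadvf] at hconc
  linarith


end
end

section
/- Let g : ℝ → ℝ be a non-decreasing continuous function and G ≥ 0 satisfy g(−γ) + G > 0 and g(γ) − G < 0, and let φ : ℝ → [0,∞) be a convex, non-increasing margin-based loss. Then the supremum-based surrogate φ̃(f,x,y) = sup_{x' : ‖x−x'‖ ≤ γ} φ(y·f(x')) is not H_g-calibrated with respect to the adversarial 0/1 loss ℓ_γ. In particular, if G > γ, then φ̃ is not H_relu-calibrated with respect to ℓ_γ. -/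
open scoped RealInnerProductSpace

noncomputable section

variable {d : ℕ}

lemma adv_one {d : ℕ} (γ : ℝ) (f : EuclideanSpace ℝ (Fin d) → ℝ)
    (x : EuclideanSpace ℝ (Fin d)) (y : ℝ)
    (h : ∃ x' ∈ Metric.closedBall x γ, y * f x' ≤ 0) :
    advLoss γ f x y = 1 := by
  obtain ⟨x', hx', hle⟩ := h
  have hne : Nonempty (Metric.closedBall x γ) := ⟨⟨x', hx'⟩⟩
  refine le_antisymm (ciSup_le fun z => ?_) ?_
  · split <;> norm_num
  · have hb : BddAbove (Set.range fun z : Metric.closedBall x γ =>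
        (if y * f ↑z ≤ 0 then (1:ℝ) else 0)) := by
      refine ⟨1, ?_⟩
      rintro r ⟨z, rfl⟩
      dsimp only; split <;> norm_num
    have := le_ciSup hb (⟨x', hx'⟩ : Metric.closedBall x γ)
    simpa [advLoss, if_pos hle] using this

lemma adv_zero {d : ℕ} {γ : ℝ} (hγ : 0 < γ) (f : EuclideanSpace ℝ (Fin d) → ℝ)
    (x : EuclideanSpace ℝ (Fin d)) (y : ℝ)
    (h : ∀ x' ∈ Metric.closedBall x γ, ¬ (y * f x' ≤ 0)) :
    advLoss γ f x y = 0 := by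
  have hne : Nonempty (Metric.closedBall x γ) := ⟨⟨x, Metric.mem_closedBall_self hγ.le⟩⟩
  have : ∀ z : Metric.closedBall x γ, (if y * f ↑z ≤ 0 then (1:ℝ) else 0) = 0 := by
    intro z; exact if_neg (h z z.2)
  calc advLoss γ f x y = ⨆ _ : Metric.closedBall x γ, (0:ℝ) := by
        unfold advLoss; exact iSup_congr this
    _ = 0 := ciSup_const

lemma adv_nonneg {d : ℕ} (γ : ℝ) (f : EuclideanSpace ℝ (Fin d) → ℝ)
    (x : EuclideanSpace ℝ (Fin d)) (y : ℝ) : 0 ≤ advLoss γ f x y := by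
  refine Real.iSup_nonneg fun z => ?_
  split <;> norm_num

lemma key (d : ℕ) (hd : 1 ≤ d) (γ : ℝ) (hγ0 : 0 < γ)
    (g : ℝ → ℝ) (hgmono : Monotone g)
    (G : ℝ) (hG : 0 ≤ G) (hg1 : 0 < g (-γ) + G) (hg2 : g γ - G < 0)
    (φ : ℝ → ℝ) (hφ0 : ∀ t, 0 ≤ φ t) (hconv : ConvexOn ℝ Set.univ φ)
    (hanti : Antitone φ) :
    ¬ Calibrated (Hg d g G) (supLoss γ φ) (advLoss γ) := by
  intro hcal
  obtain ⟨δ, hδ, himp⟩ := hcal (1/2) (by norm_num) (1/2) (by norm_num) 0 (by simp)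
  set i : Fin d := ⟨0, hd⟩
  set w : EuclideanSpace ℝ (Fin d) := EuclideanSpace.single i (1:ℝ) with hw
  have hwnorm : ‖w‖ = 1 := by simp [hw]
  have hinner : ∀ c : ℝ, (inner ℝ w (EuclideanSpace.single i c) : ℝ) = c := by
    intro c
    simp [hw, EuclideanSpace.inner_single_left, EuclideanSpace.single_apply]
  have hmemc : ∀ c : ℝ, |c| ≤ γ →
      (EuclideanSpace.single i c : EuclideanSpace ℝ (Fin d)) ∈
        Metric.closedBall (0 : EuclideanSpace ℝ (Fin d)) γ := by
    intro c hc
    rw [Metric.mem_closedBall, dist_zero_right]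
    simpa using hc
  have hbound : ∀ v : EuclideanSpace ℝ (Fin d), ‖v‖ = 1 →
      ∀ x' ∈ Metric.closedBall (0 : EuclideanSpace ℝ (Fin d)) γ,
      -γ ≤ (inner ℝ v x' : ℝ) ∧ (inner ℝ v x' : ℝ) ≤ γ := by
    intro v hv x' hx'
    have h1 : |(inner ℝ v x' : ℝ)| ≤ ‖v‖ * ‖x'‖ := abs_real_inner_le_norm v x'
    rw [hv, one_mul] at h1
    have h2 : ‖x'‖ ≤ γ := by
      rw [Metric.mem_closedBall, dist_zero_right] at hx'; exact hx'
    exact abs_le.mp (h1.trans h2)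
  have hgg : g (-γ) ≤ g γ := hgmono (by linarith)
  -- the bad minimizer f₀
  set m : ℝ := (g (-γ) - g γ)/2 with hm
  set b₀ : ℝ := -(g (-γ) + g γ)/2 with hb₀
  have hb₀G : |b₀| ≤ G := abs_le.mpr ⟨by linarith, by linarith⟩
  set f₀ : EuclideanSpace ℝ (Fin d) → ℝ := fun x => g (inner ℝ w x : ℝ) + b₀ with hf₀
  have hf₀mem : f₀ ∈ Hg d g G := ⟨w, b₀, hwnorm, hb₀G, rfl⟩
  haveI hne : Nonempty (Metric.closedBall (0:EuclideanSpace ℝ (Fin d)) γ) :=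
    ⟨⟨0, Metric.mem_closedBall_self hγ0.le⟩⟩
  haveI hneH : Nonempty (Hg d g G) := ⟨⟨f₀, hf₀mem⟩⟩
  -- the good hypothesis fG
  set fG : EuclideanSpace ℝ (Fin d) → ℝ := fun x => g (inner ℝ w x : ℝ) + G with hfG
  have hfGmem : fG ∈ Hg d g G := ⟨w, G, hwnorm, by rw [abs_of_nonneg hG], rfl⟩
  have hbdd2 : BddBelow (Set.range fun f : (Hg d g G) =>
      innerRisk (advLoss γ) (f : EuclideanSpace ℝ (Fin d) → ℝ) 0 (1/2)) := by
    refine ⟨0, ?_⟩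
    rintro r ⟨f, rfl⟩
    unfold innerRisk
    nlinarith [adv_nonneg γ (f : EuclideanSpace ℝ (Fin d) → ℝ) 0 1,
      adv_nonneg γ (f : EuclideanSpace ℝ (Fin d) → ℝ) 0 (-1)]
  -- the surrogate risk of f₀ is at most φ m
  have hS0 : innerRisk (supLoss γ φ) f₀ 0 (1/2) ≤ φ m := by
    have h1 : supLoss γ φ f₀ 0 1 ≤ φ m := by
      refine ciSup_le fun z => ?_
      apply hanti
      have := hgmono (hbound w hwnorm z z.2).1
      simp only [one_mul, hf₀]
      linarith
    have h2 : supLoss γ φ f₀ 0 (-1) ≤ φ m := by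
      refine ciSup_le fun z => ?_
      apply hanti
      have := hgmono (hbound w hwnorm z z.2).2
      simp only [hf₀]
      linarith
    unfold innerRisk
    linarith
  -- every hypothesis has surrogate risk at least φ m
  have hge : ∀ f ∈ Hg d g G, φ m ≤ innerRisk (supLoss γ φ) f 0 (1/2) := by
    rintro f ⟨v, b, hv, hb, rfl⟩
    have hiv : ∀ c : ℝ, (inner ℝ v (c • v) : ℝ) = c := by
      intro c
      rw [real_inner_smul_right, real_inner_self_eq_norm_mul_norm, hv]
      ring
    have hmem : ∀ c : ℝ, |c| ≤ γ →
        (c • v) ∈ Metric.closedBall (0 : EuclideanSpace ℝ (Fin d)) γ := by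
      intro c hc
      rw [Metric.mem_closedBall, dist_zero_right, norm_smul, hv, mul_one]
      exact hc
    have hz1 := hmem (-γ) (by rw [abs_neg, abs_of_pos hγ0])
    have hz2 := hmem γ (by rw [abs_of_pos hγ0])
    have hA : φ (g (-γ) + b) ≤ supLoss γ φ (fun x => g (inner ℝ v x : ℝ) + b) 0 1 := by
      have hbA : BddAbove (Set.range fun z : Metric.closedBall (0:EuclideanSpace ℝ (Fin d)) γ =>
          φ ((1:ℝ) * ((fun x => g (inner ℝ v x : ℝ) + b) ↑z))) := by
        refine ⟨φ (g (-γ) + b), ?_⟩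
        rintro r ⟨z, rfl⟩
        dsimp only
        apply hanti
        have := hgmono (hbound v hv z z.2).1
        linarith
      have := le_ciSup hbA (⟨(-γ) • v, hz1⟩ : Metric.closedBall (0:EuclideanSpace ℝ (Fin d)) γ)
      simpa [supLoss, hiv] using this
    have hB : φ (-(g γ + b)) ≤ supLoss γ φ (fun x => g (inner ℝ v x : ℝ) + b) 0 (-1) := by
      have hbB : BddAbove (Set.range fun z : Metric.closedBall (0:EuclideanSpace ℝ (Fin d)) γ =>
          φ ((-1:ℝ) * ((fun x => g (inner ℝ v x : ℝ) + b) ↑z))) := by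
        refine ⟨φ (-(g γ + b)), ?_⟩
        rintro r ⟨z, rfl⟩
        dsimp only
        apply hanti
        have := hgmono (hbound v hv z z.2).2
        linarith
      have := le_ciSup hbB (⟨γ • v, hz2⟩ : Metric.closedBall (0:EuclideanSpace ℝ (Fin d)) γ)
      simpa [supLoss, hiv] using this
    have hmid : φ m ≤ (φ (g (-γ) + b) + φ (-(g γ + b)))/2 := by
      have h := hconv.2 (Set.mem_univ (g (-γ) + b)) (Set.mem_univ (-(g γ + b)))
        (by norm_num : (0:ℝ) ≤ 1/2) (by norm_num : (0:ℝ) ≤ 1/2) (by norm_num)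
      have he : (1/2 : ℝ) • (g (-γ) + b) + (1/2:ℝ) • (-(g γ + b)) = m := by
        rw [smul_eq_mul, smul_eq_mul, hm]; ring
      rw [he, smul_eq_mul, smul_eq_mul] at h
      linarith
    unfold innerRisk
    linarith
  -- f₀ is an exact surrogate minimizer
  have hmin1 : innerRisk (supLoss γ φ) f₀ 0 (1/2) ≤
      minInnerRisk (supLoss γ φ) (Hg d g G) 0 (1/2) := by
    refine le_ciInf fun f => hS0.trans (hge f f.2)
  have h2 := himp f₀ hf₀mem (by linarith)
  -- adversarial risk of f₀ is 1
  have hadv1 : advLoss γ f₀ 0 1 = 1 := by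
    refine adv_one γ f₀ 0 1 ⟨EuclideanSpace.single i (-γ), hmemc (-γ) (by
      rw [abs_neg, abs_of_pos hγ0]), ?_⟩
    simp only [one_mul, hf₀]
    rw [hinner]
    linarith
  have hadv2 : advLoss γ f₀ 0 (-1) = 1 := by
    refine adv_one γ f₀ 0 (-1) ⟨EuclideanSpace.single i γ, hmemc γ (by
      rw [abs_of_pos hγ0]), ?_⟩
    simp only [hf₀]
    rw [hinner]
    linarith
  have hrisk0 : innerRisk (advLoss γ) f₀ 0 (1/2) = 1 := by
    unfold innerRisk; rw [hadv1, hadv2]; norm_num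
  -- adversarial risk of fG is 1/2
  have hadvG1 : advLoss γ fG 0 1 = 0 := by
    refine adv_zero hγ0 fG 0 1 ?_
    intro x' hx'
    have : g (-γ) ≤ g (inner ℝ w x' : ℝ) := hgmono (hbound w hwnorm x' hx').1
    push_neg
    simp only [one_mul, hfG]
    linarith
  have hadvG2 : advLoss γ fG 0 (-1) = 1 := by
    refine adv_one γ fG 0 (-1) ⟨0, Metric.mem_closedBall_self hγ0.le, ?_⟩
    have : g (-γ) ≤ g (inner ℝ w (0 : EuclideanSpace ℝ (Fin d)) : ℝ) := hgmono (by
      rw [inner_zero_right]; linarith)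
    simp only [hfG]
    nlinarith
  have hriskG : innerRisk (advLoss γ) fG 0 (1/2) = 1/2 := by
    unfold innerRisk; rw [hadvG1, hadvG2]; norm_num
  have hmin2 : minInnerRisk (advLoss γ) (Hg d g G) 0 (1/2) ≤ 1/2 := by
    have := ciInf_le hbdd2 (⟨fG, hfGmem⟩ : Hg d g G)
    rw [hriskG] at this
    exact this
  rw [hrisk0] at h2
  linarith [h2, hmin2]

theorem stmt6 (d : ℕ) (hd : 1 ≤ d) (γ : ℝ) (hγ0 : 0 < γ) (hγ1 : γ < 1)
    (g : ℝ → ℝ) (hgmono : Monotone g) (hgcont : Continuous g)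
    (G : ℝ) (hG : 0 ≤ G) (hg1 : 0 < g (-γ) + G) (hg2 : g γ - G < 0)
    (φ : ℝ → ℝ) (hφ0 : ∀ t, 0 ≤ φ t) (hconv : ConvexOn ℝ Set.univ φ)
    (hanti : Antitone φ) :
    ¬ Calibrated (Hg d g G) (supLoss γ φ) (advLoss γ) ∧
    (γ < G → ¬ Calibrated (Hrelu d G) (supLoss γ φ) (advLoss γ)) := by
  constructor
  · exact key d hd γ hγ0 g hgmono G hG hg1 hg2 φ hφ0 hconv hanti
  · intro hγG
    refine key d hd γ hγ0 (fun t => max t 0) (fun a b h => max_le_max h le_rfl)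
      G (by linarith) ?_ ?_ φ hφ0 hconv hanti
    · show 0 < max (-γ) 0 + G
      rw [max_eq_right (by linarith : -γ ≤ 0)]; linarith
    · show max γ 0 - G < 0
      rw [max_eq_left hγ0.le]; linarith


end
end

section
/- Let H be a hypothesis set of functions from ℝ^d to ℝ that contains the zero function and is regular for adversarial calibration. If a margin-based loss φ : ℝ → [0,∞) is convex and non-increasing, then the supremum-based surrogate φ̃(f,x,y) = sup_{x' : ‖x−x'‖ ≤ γ} φ(y·f(x')) is not H-calibrated with respect to the adversarial 0/1 loss ℓ_γ. -/
open scoped RealInnerProductSpace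

noncomputable section

variable {d : ℕ}

theorem stmt7 (d : ℕ) (hd : 1 ≤ d) (γ : ℝ) (hγ0 : 0 < γ) (hγ1 : γ < 1)
    (H : Set (EuclideanSpace ℝ (Fin d) → ℝ))
    (h0 : (fun _ => (0:ℝ)) ∈ H) (hreg : RegularAdv γ H)
    (φ : ℝ → ℝ) (hφ0 : ∀ t, 0 ≤ φ t) (hconv : ConvexOn ℝ Set.univ φ)
    (hanti : Antitone φ) :
    ¬ Calibrated H (supLoss γ φ) (advLoss γ) := by
  intro hcal
  obtain ⟨x, hx1, ⟨fp, hfpH, hfp⟩, ⟨gm, hgmH, hgm⟩⟩ := hreg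
  haveI hne : Nonempty (Metric.closedBall x γ) :=
    ⟨⟨x, Metric.mem_closedBall_self hγ0.le⟩⟩
  haveI hHne : Nonempty H := ⟨⟨_, h0⟩⟩
  set x₀ : Metric.closedBall x γ := ⟨x, Metric.mem_closedBall_self hγ0.le⟩ with hx₀
  -- fp is strictly positive on the ball
  have hfp' : ∀ x' : Metric.closedBall x γ, 0 < fp ↑x' := by
    intro x'
    by_cases hb : BddBelow (Set.range fun x' : Metric.closedBall x γ => fp ↑x')
    · exact lt_of_lt_of_le hfp (ciInf_le hb x')
    · exfalso
      have := Real.iInf_of_not_bddBelow hb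
      rw [infBall] at hfp; rw [this] at hfp; exact lt_irrefl 0 hfp
  -- gm is strictly negative on the ball
  have hgm' : ∀ x' : Metric.closedBall x γ, gm ↑x' < 0 := by
    intro x'
    by_cases hb : BddAbove (Set.range fun x' : Metric.closedBall x γ => gm ↑x')
    · exact lt_of_le_of_lt (le_ciSup hb x') hgm
    · exfalso
      have := Real.iSup_of_not_bddAbove hb
      rw [supBall] at hgm; rw [this] at hgm; exact lt_irrefl 0 hgm
  -- basic facts about adversarial loss values
  have hadv_nonneg : ∀ (f : EuclideanSpace ℝ (Fin d) → ℝ) (y : ℝ), 0 ≤ advLoss γ f x y := by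
    intro f y
    exact Real.iSup_nonneg fun i => by split <;> norm_num
  have hadv_one : ∀ (f : EuclideanSpace ℝ (Fin d) → ℝ) (y : ℝ),
      (∃ x' : Metric.closedBall x γ, y * f ↑x' ≤ 0) → advLoss γ f x y = 1 := by
    intro f y ⟨i, hi⟩
    apply le_antisymm
    · exact ciSup_le fun j => by split <;> norm_num
    · have hb : BddAbove (Set.range fun x' : Metric.closedBall x γ =>
          (if y * f ↑x' ≤ 0 then (1:ℝ) else 0)) :=
        ⟨1, by rintro _ ⟨j, rfl⟩; dsimp only; split <;> norm_num⟩
      have := le_ciSup hb i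
      simp only [hi, if_pos] at this
      exact this
  have hadv_zero : ∀ (f : EuclideanSpace ℝ (Fin d) → ℝ) (y : ℝ),
      (∀ x' : Metric.closedBall x γ, ¬ (y * f ↑x' ≤ 0)) → advLoss γ f x y = 0 := by
    intro f y hall
    have : (fun x' : Metric.closedBall x γ => (if y * f ↑x' ≤ 0 then (1:ℝ) else 0))
        = fun _ => 0 := funext fun i => by simp [hall i]
    rw [advLoss, this, ciSup_const]
  -- inner adversarial risks are nonneg for η ∈ [0,1]
  have hrisk2_nonneg : ∀ (f : EuclideanSpace ℝ (Fin d) → ℝ) (η : ℝ), 0 ≤ η → η ≤ 1 →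
      0 ≤ innerRisk (advLoss γ) f x η := by
    intro f η h0' h1'
    have := hadv_nonneg f 1
    have := hadv_nonneg f (-1)
    unfold innerRisk
    nlinarith
  have hbdd2 : ∀ (η : ℝ), 0 ≤ η → η ≤ 1 →
      BddBelow (Set.range fun f : H => innerRisk (advLoss γ) ↑f x η) := by
    intro η h0' h1'
    exact ⟨0, by rintro _ ⟨f, rfl⟩; exact hrisk2_nonneg _ _ h0' h1'⟩
  -- supLoss values are nonneg
  have hsup_nonneg : ∀ (f : EuclideanSpace ℝ (Fin d) → ℝ) (y : ℝ),
      0 ≤ supLoss γ φ f x y := fun f y => Real.iSup_nonneg fun i => hφ0 _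
  by_cases hcase : ∀ f ∈ H, φ 0 ≤ innerRisk (supLoss γ φ) f x (1/2)
  · -- Case 1: zero function is a minimizer of the surrogate at η = 1/2
    obtain ⟨δ, hδ, hd⟩ := hcal (1/2) one_half_pos (1/2) ⟨by norm_num, by norm_num⟩ x hx1
    have hr1 : innerRisk (supLoss γ φ) (fun _ => (0:ℝ)) x (1/2) = φ 0 := by
      unfold innerRisk supLoss
      simp only [mul_zero, ciSup_const]
      ring
    have hmin1 : φ 0 ≤ minInnerRisk (supLoss γ φ) H x (1/2) :=
      le_ciInf fun f => hcase f f.2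
    have hnear : innerRisk (supLoss γ φ) (fun _ => (0:ℝ)) x (1/2)
        < minInnerRisk (supLoss γ φ) H x (1/2) + δ := by
      rw [hr1]; linarith
    have hbad := hd (fun _ => (0:ℝ)) h0 hnear
    have hr2 : innerRisk (advLoss γ) (fun _ => (0:ℝ)) x (1/2) = 1 := by
      have h1 : advLoss γ (fun _ => (0:ℝ)) x 1 = 1 := hadv_one _ _ ⟨x₀, by norm_num⟩
      have h2 : advLoss γ (fun _ => (0:ℝ)) x (-1) = 1 := hadv_one _ _ ⟨x₀, by norm_num⟩
      unfold innerRisk; rw [h1, h2]; ring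
    have hrfp : innerRisk (advLoss γ) fp x (1/2) = 1/2 := by
      have h1 : advLoss γ fp x 1 = 0 := by
        apply hadv_zero; intro x'; rw [one_mul]; exact not_le.2 (hfp' x')
      have h2 : advLoss γ fp x (-1) = 1 := by
        apply hadv_one; exact ⟨x₀, by nlinarith [hfp' x₀]⟩
      unfold innerRisk; rw [h1, h2]; ring
    have hmin2 : minInnerRisk (advLoss γ) H x (1/2) ≤ 1/2 := by
      have := ciInf_le (hbdd2 (1/2) (by norm_num) (by norm_num)) (⟨fp, hfpH⟩ : H)
      rw [minInnerRisk]; rw [hrfp] at this; exact this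
    rw [hr2] at hbad
    linarith
  · -- Case 2: some h ∈ H has surrogate risk < φ 0 at η = 1/2; a sup must be "junk"
    push_neg at hcase
    obtain ⟨h, hH, hhlt⟩ := hcase
    have hconv0 : ∀ t : ℝ, φ 0 ≤ (1/2) * φ t + (1/2) * φ (-t) := by
      intro t
      have := hconv.2 (Set.mem_univ t) (Set.mem_univ (-t))
        (by norm_num : (0:ℝ) ≤ 1/2) (by norm_num : (0:ℝ) ≤ 1/2) (by norm_num)
      simpa [smul_eq_mul] using this
    have hjunk : ¬ (BddAbove (Set.range fun x' : Metric.closedBall x γ => φ (1 * h ↑x'))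
        ∧ BddAbove (Set.range fun x' : Metric.closedBall x γ => φ (-1 * h ↑x'))) := by
      rintro ⟨hbA, hbB⟩
      have hA : φ (1 * h x) ≤ supLoss γ φ h x 1 := le_ciSup hbA x₀
      have hB : φ (-1 * h x) ≤ supLoss γ φ h x (-1) := le_ciSup hbB x₀
      have := hconv0 (h x)
      rw [one_mul] at hA
      rw [show (-1 : ℝ) * h x = -(h x) by ring] at hB
      unfold innerRisk at hhlt
      linarith
    rw [not_and_or] at hjunk
    rcases hjunk with hjA | hjB
    · -- sup over φ(h ·) is unbounded: h takes a value ≤ 0 on the ball; use η = 1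
      have hA0 : supLoss γ φ h x 1 = 0 := Real.iSup_of_not_bddAbove hjA
      have hx' : ∃ x' : Metric.closedBall x γ, h ↑x' ≤ 0 := by
        by_contra hno
        push_neg at hno
        exact hjA ⟨φ 0, by rintro _ ⟨j, rfl⟩; exact hanti (by nlinarith [hno j])⟩
      obtain ⟨δ, hδ, hd⟩ := hcal (1/2) one_half_pos 1 ⟨by norm_num, le_refl 1⟩ x hx1
      have hr1 : innerRisk (supLoss γ φ) h x 1 = 0 := by
        unfold innerRisk; rw [hA0]; ring
      have hmin1 : (0:ℝ) ≤ minInnerRisk (supLoss γ φ) H x 1 := by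
        apply le_ciInf
        intro f
        unfold innerRisk
        have := hsup_nonneg (↑f) 1
        linarith
      have hbad := hd h hH (by rw [hr1]; linarith)
      have hr2 : innerRisk (advLoss γ) h x 1 = 1 := by
        obtain ⟨x', hx'0⟩ := hx'
        have h1 : advLoss γ h x 1 = 1 := hadv_one _ _ ⟨x', by linarith [hx'0]⟩
        unfold innerRisk; rw [h1]; ring
      have hrfp : innerRisk (advLoss γ) fp x 1 = 0 := by
        have h1 : advLoss γ fp x 1 = 0 := by
          apply hadv_zero; intro x'; rw [one_mul]; exact not_le.2 (hfp' x')
        unfold innerRisk; rw [h1]; ring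
      have hmin2 : minInnerRisk (advLoss γ) H x 1 ≤ 0 := by
        have := ciInf_le (hbdd2 1 (by norm_num) (le_refl 1)) (⟨fp, hfpH⟩ : H)
        rw [minInnerRisk]; rw [hrfp] at this; exact this
      rw [hr2] at hbad
      linarith
    · -- sup over φ(-h ·) is unbounded: h takes a value ≥ 0 on the ball; use η = 0
      have hB0 : supLoss γ φ h x (-1) = 0 := Real.iSup_of_not_bddAbove hjB
      have hx' : ∃ x' : Metric.closedBall x γ, 0 ≤ h ↑x' := by
        by_contra hno
        push_neg at hno
        exact hjB ⟨φ 0, by rintro _ ⟨j, rfl⟩; exact hanti (by nlinarith [hno j])⟩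
      obtain ⟨δ, hδ, hd⟩ := hcal (1/2) one_half_pos 0 ⟨le_refl 0, by norm_num⟩ x hx1
      have hr1 : innerRisk (supLoss γ φ) h x 0 = 0 := by
        unfold innerRisk; rw [hB0]; ring
      have hmin1 : (0:ℝ) ≤ minInnerRisk (supLoss γ φ) H x 0 := by
        apply le_ciInf
        intro f
        unfold innerRisk
        have := hsup_nonneg (↑f) (-1)
        linarith
      have hbad := hd h hH (by rw [hr1]; linarith)
      have hr2 : innerRisk (advLoss γ) h x 0 = 1 := by
        obtain ⟨x', hx'0⟩ := hx'
        have h1 : advLoss γ h x (-1) = 1 := hadv_one _ _ ⟨x', by linarith [hx'0]⟩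
        unfold innerRisk; rw [h1]; ring
      have hrgm : innerRisk (advLoss γ) gm x 0 = 0 := by
        have h1 : advLoss γ gm x (-1) = 0 := by
          apply hadv_zero; intro x'
          have := hgm' x'
          intro habs; nlinarith
        unfold innerRisk; rw [h1]; ring
      have hmin2 : minInnerRisk (advLoss γ) H x 0 ≤ 0 := by
        have := ciInf_le (hbdd2 0 (le_refl 0) (by norm_num)) (⟨gm, hgmH⟩ : H)
        rw [minInnerRisk]; rw [hrgm] at this; exact this
      rw [hr2] at hbad
      linarith

end
end

section
/- Let d ≥ 2 and let the margin-based loss φ : ℝ → [0,∞) be bounded, continuous, non-increasing and quasi-concave even, and assume φ(−t) > φ(t) for every t with γ < t ≤ 1. Then φ is H_lin-calibrated with respect to the adversarial 0/1 loss ℓ_γ if and only if φ(γ) + φ(−γ) > φ(t) + φ(−t) for every t with γ < t ≤ 1. -/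
open scoped RealInnerProductSpace

noncomputable section

variable {d : ℕ}

section AuxCalib

open Classical in
lemma iSup_indicator {α : Sort*} [Nonempty α] (p : α → Prop) [DecidablePred p] :
    (⨆ a, (if p a then (1:ℝ) else 0)) = if ∃ a, p a then 1 else 0 := by
  by_cases h : ∃ a, p a
  · rw [if_pos h]
    obtain ⟨a, ha⟩ := h
    apply le_antisymm
    · apply ciSup_le; intro b; by_cases hpb : p b <;> simp [hpb]
    · have hb : BddAbove (Set.range fun a => (if p a then (1:ℝ) else 0)) := by
        refine ⟨1, ?_⟩; rintro y ⟨b, rfl⟩; by_cases hpb : p b <;> simp [hpb]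
      have := le_ciSup hb a
      rw [if_pos ha] at this
      exact this
  · rw [if_neg h]
    push_neg at h
    have : (fun a => (if p a then (1:ℝ) else 0)) = fun _ => (0:ℝ) := by
      funext a; rw [if_neg (h a)]
    rw [this, ciSup_const]

lemma h_noninc (φ : ℝ → ℝ) (hqce : QuasiconcaveOn ℝ Set.univ (fun t => φ t + φ (-t)))
    {a b : ℝ} (ha : 0 ≤ a) (hab : a ≤ b) : φ b + φ (-b) ≤ φ a + φ (-a) := by
  have hconv := hqce (φ b + φ (-b))
  have hb : b ∈ {x ∈ Set.univ | φ b + φ (-b) ≤ φ x + φ (-x)} := ⟨trivial, le_refl _⟩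
  have hnb : -b ∈ {x ∈ Set.univ | φ b + φ (-b) ≤ φ x + φ (-x)} := by
    refine ⟨trivial, ?_⟩
    rw [neg_neg]; rw [add_comm]
  have hseg := hconv.segment_subset hnb hb
  have hmem : a ∈ segment ℝ (-b) b := by
    rw [segment_eq_Icc (by linarith)]
    exact ⟨by linarith, hab⟩
  exact (hseg hmem).2

/-- conditional φ-risk as function of the inner product value -/
def Cfun (φ : ℝ → ℝ) (η t : ℝ) : ℝ := η * φ t + (1 - η) * φ (-t)

/-- the adversarial risk profile -/
def Afun (γ η t : ℝ) : ℝ :=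
  (if t ≤ γ then η else 0) + (if -γ ≤ t then 1 - η else 0)

lemma key_ineq (γ : ℝ) (hγ0 : 0 < γ) (φ : ℝ → ℝ) (hanti : Antitone φ)
    (hmono : ∀ a b : ℝ, 0 ≤ a → a ≤ b → φ b + φ (-b) ≤ φ a + φ (-a))
    (hstrict : ∀ t : ℝ, γ < t → t ≤ 1 → φ t < φ (-t))
    (cond : ∀ t : ℝ, γ < t → t ≤ 1 → φ t + φ (-t) < φ γ + φ (-γ))
    (r : ℝ) (hr1 : γ < r) (hr2 : r ≤ 1)
    (η : ℝ) (hη1 : 1/2 < η) (hη2 : η ≤ 1)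
    (t : ℝ) (ht1 : -r ≤ t) (ht2 : t ≤ γ) :
    Cfun φ η r < Cfun φ η t := by
  unfold Cfun
  rcases le_or_gt (-γ) t with h | h
  · have h1 : φ r + φ (-r) < φ γ + φ (-γ) := cond r hr1 hr2
    have h2 : φ γ + φ (-γ) ≤ φ |t| + φ (-|t|) := hmono |t| γ (abs_nonneg t) (abs_le.mpr ⟨h, ht2⟩)
    have h3 : φ |t| + φ (-|t|) = φ t + φ (-t) := by
      rcases abs_cases t with ⟨he, _⟩ | ⟨he, _⟩ <;> rw [he]
      rw [neg_neg, add_comm]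
    have h4 : φ (-t) ≤ φ (-r) := hanti (by linarith)
    rw [h3] at h2
    nlinarith [mul_nonneg (by linarith : (0:ℝ) ≤ 2*η - 1) (by linarith : (0:ℝ) ≤ φ (-r) - φ (-t)),
      mul_pos (by linarith : (0:ℝ) < η) (by linarith : (0:ℝ) < (φ t + φ (-t)) - (φ r + φ (-r)))]
  · have hs1 : γ < -t := by linarith
    have hs2 : -t ≤ r := by linarith
    have hmon : φ r + φ (-r) ≤ φ (-t) + φ t := by
      have := hmono (-t) r (by linarith) hs2
      rw [neg_neg] at this; linarith
    have hst : φ (-t) < φ t := by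
      have := hstrict (-t) hs1 (le_trans hs2 hr2)
      rw [neg_neg] at this; exact this
    have h4 : φ r ≤ φ (-t) := hanti hs2
    nlinarith [mul_pos (by linarith : (0:ℝ) < 2*η - 1) (by linarith : (0:ℝ) < φ t - φ r),
      mul_nonneg (by linarith : (0:ℝ) ≤ 1 - η)
        (by linarith : (0:ℝ) ≤ (φ (-t) + φ t) - (φ r + φ (-r)))]

lemma Cfun_neg (φ : ℝ → ℝ) (η t : ℝ) : Cfun φ η (-t) = Cfun φ (1-η) t := by
  unfold Cfun; rw [neg_neg]; ring

lemma key_ineq_half (γ : ℝ) (φ : ℝ → ℝ)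
    (hmono : ∀ a b : ℝ, 0 ≤ a → a ≤ b → φ b + φ (-b) ≤ φ a + φ (-a))
    (cond : ∀ t : ℝ, γ < t → t ≤ 1 → φ t + φ (-t) < φ γ + φ (-γ))
    (r : ℝ) (hr1 : γ < r) (hr2 : r ≤ 1)
    (t : ℝ) (ht1 : -γ ≤ t) (ht2 : t ≤ γ) :
    Cfun φ (1/2) r < Cfun φ (1/2) t := by
  unfold Cfun
  have h1 : φ r + φ (-r) < φ γ + φ (-γ) := cond r hr1 hr2
  have h2 : φ γ + φ (-γ) ≤ φ |t| + φ (-|t|) := hmono |t| γ (abs_nonneg t) (abs_le.mpr ⟨ht1, ht2⟩)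
  have h3 : φ |t| + φ (-|t|) = φ t + φ (-t) := by
    rcases abs_cases t with ⟨he, _⟩ | ⟨he, _⟩ <;> rw [he]
    rw [neg_neg, add_comm]
  linarith

lemma innerRisk_margin (φ : ℝ → ℝ) (w x : EuclideanSpace ℝ (Fin d)) (η : ℝ) :
    innerRisk (marginLoss φ) (fun z => (inner ℝ w z : ℝ)) x η = Cfun φ η ⟪w, x⟫ := by
  simp [innerRisk, marginLoss, Cfun]

lemma innerRisk_adv (γ : ℝ) (hγ0 : 0 < γ) (w x : EuclideanSpace ℝ (Fin d)) (hw : ‖w‖ = 1)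
    (η : ℝ) :
    innerRisk (advLoss γ) (fun z => (inner ℝ w z : ℝ)) x η = Afun γ η ⟪w, x⟫ := by
  haveI : Nonempty (Metric.closedBall x γ) :=
    Set.Nonempty.to_subtype (Metric.nonempty_closedBall.mpr hγ0.le)
  have bound : ∀ x' ∈ Metric.closedBall x γ, |⟪w, x'⟫ - ⟪w, x⟫| ≤ γ := by
    intro x' hx'
    have h : ⟪w, x'⟫ - ⟪w, x⟫ = ⟪w, x' - x⟫ := (inner_sub_right w x' x).symm
    rw [h]
    calc |⟪w, x' - x⟫| ≤ ‖w‖ * ‖x' - x‖ := abs_real_inner_le_norm w (x' - x)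
      _ ≤ γ := by
          rw [hw, one_mul, ← dist_eq_norm]
          exact Metric.mem_closedBall.mp hx'
  have mem1 : x - γ • w ∈ Metric.closedBall x γ := by
    rw [Metric.mem_closedBall, dist_eq_norm]
    simp [norm_smul, hw, abs_of_pos hγ0]
  have mem2 : x + γ • w ∈ Metric.closedBall x γ := by
    rw [Metric.mem_closedBall, dist_eq_norm]
    simp [norm_smul, hw, abs_of_pos hγ0]
  have val1 : ⟪w, x - γ • w⟫ = ⟪w, x⟫ - γ := by
    rw [inner_sub_right, real_inner_smul_right, real_inner_self_eq_norm_sq, hw]; ring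
  have val2 : ⟪w, x + γ • w⟫ = ⟪w, x⟫ + γ := by
    rw [inner_add_right, real_inner_smul_right, real_inner_self_eq_norm_sq, hw]; ring
  have e1 : advLoss γ (fun z => (inner ℝ w z : ℝ)) x 1 = if ⟪w, x⟫ ≤ γ then (1:ℝ) else 0 := by
    unfold advLoss
    rw [iSup_indicator]
    congr 1
    simp only [one_mul, eq_iff_iff]
    constructor
    · rintro ⟨⟨x', hx'⟩, hle⟩
      have hb := abs_le.mp (bound x' hx')
      have h0 : ⟪w, x'⟫ ≤ 0 := hle
      linarith [hb.1]
    · intro hle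
      refine ⟨⟨x - γ • w, mem1⟩, ?_⟩
      show ⟪w, x - γ • w⟫ ≤ 0
      rw [val1]; linarith
  have e2 : advLoss γ (fun z => (inner ℝ w z : ℝ)) x (-1) = if -γ ≤ ⟪w, x⟫ then (1:ℝ) else 0 := by
    unfold advLoss
    rw [iSup_indicator]
    congr 1
    simp only [neg_one_mul, neg_nonpos, eq_iff_iff]
    constructor
    · rintro ⟨⟨x', hx'⟩, hle⟩
      have hb := abs_le.mp (bound x' hx')
      have h0 : (0:ℝ) ≤ ⟪w, x'⟫ := hle
      linarith [hb.2]
    · intro hle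
      refine ⟨⟨x + γ • w, mem2⟩, ?_⟩
      show (0:ℝ) ≤ ⟪w, x + γ • w⟫
      rw [val2]
      linarith
  rw [innerRisk, e1, e2, Afun]
  split <;> split <;> ring

lemma Afun_ge (γ η t : ℝ) (hγ0 : 0 < γ) (hη0 : 0 ≤ η) (hη1 : η ≤ 1) :
    min η (1 - η) ≤ Afun γ η t := by
  unfold Afun
  by_cases h1 : t ≤ γ
  · rw [if_pos h1]
    have h2 : (0:ℝ) ≤ if -γ ≤ t then 1 - η else 0 := by
      split
      · linarith
      · exact le_refl 0
    have h3 := min_le_left η (1 - η)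
    linarith
  · rw [if_neg h1, if_pos (by push_neg at h1; linarith)]
    have h3 := min_le_right η (1 - η)
    linarith

lemma hlin_nonempty (d : ℕ) (hd : 0 < d) : Nonempty (Hlin d) := by
  refine ⟨⟨fun z => (inner ℝ (EuclideanSpace.single (⟨0, hd⟩ : Fin d) (1:ℝ)) z : ℝ),
    EuclideanSpace.single (⟨0, hd⟩ : Fin d) (1:ℝ), ?_, rfl⟩⟩
  rw [EuclideanSpace.norm_single]
  norm_num

lemma margin_bddBelow (d : ℕ) (φ : ℝ → ℝ) (hφ0 : ∀ t, 0 ≤ φ t)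
    (x : EuclideanSpace ℝ (Fin d)) (η : ℝ) (hη0 : 0 ≤ η) (hη1 : η ≤ 1) :
    BddBelow (Set.range fun f : Hlin d => innerRisk (marginLoss φ) f x η) := by
  refine ⟨0, ?_⟩
  rintro y ⟨f, rfl⟩
  show (0:ℝ) ≤ innerRisk (marginLoss φ) f x η
  unfold innerRisk marginLoss
  exact add_nonneg (mul_nonneg hη0 (hφ0 _))
    (mul_nonneg (by linarith : (0:ℝ) ≤ 1 - η) (hφ0 _))

lemma minAdv_ge (d : ℕ) (hd : 0 < d) (γ : ℝ) (hγ0 : 0 < γ)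
    (x : EuclideanSpace ℝ (Fin d)) (η : ℝ) (hη0 : 0 ≤ η) (hη1 : η ≤ 1) :
    min η (1 - η) ≤ minInnerRisk (advLoss γ) (Hlin d) x η := by
  haveI := hlin_nonempty d hd
  apply le_ciInf
  rintro ⟨f, w, hw, rfl⟩
  rw [innerRisk_adv γ hγ0 w x hw]
  exact Afun_ge γ η _ hγ0 hη0 hη1

lemma calib_core (d : ℕ) (hd : 0 < d) (γ : ℝ) (hγ0 : 0 < γ) (φ : ℝ → ℝ) (hφ0 : ∀ t, 0 ≤ φ t)
    (hcont : Continuous φ) (η : ℝ) (hη0 : 0 ≤ η) (hη1 : η ≤ 1)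
    (x : EuclideanSpace ℝ (Fin d))
    (a b : ℝ) (hab : a ≤ b)
    (w₀ : EuclideanSpace ℝ (Fin d)) (hw₀ : ‖w₀‖ = 1)
    (hstrictS : ∀ t ∈ Set.Icc a b, Cfun φ η ⟪w₀, x⟫ < Cfun φ η t)
    (hgood : ∀ t : ℝ, |t| ≤ ‖x‖ → t ∉ Set.Icc a b → Afun γ η t ≤ min η (1 - η))
    (ε : ℝ) (hε : 0 < ε) :
    ∃ δ > (0:ℝ), ∀ f ∈ Hlin d,
      innerRisk (marginLoss φ) f x η < minInnerRisk (marginLoss φ) (Hlin d) x η + δ →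
      innerRisk (advLoss γ) f x η < minInnerRisk (advLoss γ) (Hlin d) x η + ε := by
  have hmem : (fun z => (inner ℝ w₀ z : ℝ)) ∈ Hlin d := ⟨w₀, hw₀, rfl⟩
  have hminle : minInnerRisk (marginLoss φ) (Hlin d) x η ≤ Cfun φ η ⟪w₀, x⟫ := by
    have := ciInf_le (margin_bddBelow d φ hφ0 x η hη0 hη1) (⟨_, hmem⟩ : Hlin d)
    rwa [innerRisk_margin] at this
  have hCcont : Continuous (fun t => Cfun φ η t) := by
    unfold Cfun
    exact (continuous_const.mul hcont).add
      (continuous_const.mul (hcont.comp continuous_neg))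
  obtain ⟨tm, htmS, htmmin⟩ := isCompact_Icc.exists_isMinOn (Set.nonempty_Icc.mpr hab)
    hCcont.continuousOn
  set minC := minInnerRisk (marginLoss φ) (Hlin d) x η with hminC
  refine ⟨Cfun φ η tm - minC, by linarith [hstrictS tm htmS], ?_⟩
  rintro f ⟨w, hw, rfl⟩ hrisk
  rw [innerRisk_margin] at hrisk
  have htr : |⟪w, x⟫| ≤ ‖x‖ := by
    have := abs_real_inner_le_norm w x
    rwa [hw, one_mul] at this
  have hnotS : ⟪w, x⟫ ∉ Set.Icc a b := by
    intro hS
    have h1 := isMinOn_iff.mp htmmin _ hS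
    linarith
  have hA := hgood _ htr hnotS
  rw [innerRisk_adv γ hγ0 w x hw]
  have hminAdv := minAdv_ge d hd γ hγ0 x η hη0 hη1
  linarith


lemma Afun_nonneg (γ η t : ℝ) (hη0 : 0 ≤ η) (hη1 : η ≤ 1) : 0 ≤ Afun γ η t := by
  unfold Afun
  apply add_nonneg <;> split <;> linarith

lemma adv_bddBelow (d : ℕ) (γ : ℝ) (hγ0 : 0 < γ) (x : EuclideanSpace ℝ (Fin d))
    (η : ℝ) (hη0 : 0 ≤ η) (hη1 : η ≤ 1) :
    BddBelow (Set.range fun f : Hlin d => innerRisk (advLoss γ) f x η) := by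
  refine ⟨0, ?_⟩
  rintro y ⟨f, rfl⟩
  show (0:ℝ) ≤ innerRisk (advLoss γ) ↑f x η
  obtain ⟨w', hw', hfe⟩ := f.2
  rw [hfe, innerRisk_adv γ hγ0 w' x hw']
  exact Afun_nonneg γ η _ hη0 hη1


lemma exists_unit_dir (x : EuclideanSpace ℝ (Fin d)) (hx : 0 < ‖x‖) :
    ∃ w0 : EuclideanSpace ℝ (Fin d), ‖w0‖ = 1 ∧ ⟪w0, x⟫ = ‖x‖ := by
  refine ⟨‖x‖⁻¹ • x, ?_, ?_⟩
  · rw [norm_smul, norm_inv, norm_norm, inv_mul_cancel₀ hx.ne']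
  · rw [real_inner_smul_left, real_inner_self_eq_norm_sq, sq,
      ← mul_assoc, inv_mul_cancel₀ hx.ne', one_mul]

lemma exists_unit_dir_neg (x : EuclideanSpace ℝ (Fin d)) (hx : 0 < ‖x‖) :
    ∃ w0 : EuclideanSpace ℝ (Fin d), ‖w0‖ = 1 ∧ ⟪w0, x⟫ = -‖x‖ := by
  obtain ⟨w0, h1, h2⟩ := exists_unit_dir x hx
  exact ⟨-w0, by rwa [norm_neg], by rw [inner_neg_left, h2]⟩

end AuxCalib

set_option maxHeartbeats 2000000 in
theorem stmt9 (d : ℕ) (hd : 2 ≤ d) (γ : ℝ) (hγ0 : 0 < γ) (hγ1 : γ < 1)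
    (φ : ℝ → ℝ) (hφ0 : ∀ t, 0 ≤ φ t) (hbdd : ∃ M, ∀ t, φ t ≤ M)
    (hcont : Continuous φ) (hanti : Antitone φ)
    (hqce : QuasiconcaveOn ℝ Set.univ (fun t => φ t + φ (-t)))
    (hstrict : ∀ t : ℝ, γ < t → t ≤ 1 → φ t < φ (-t)) :
    Calibrated (Hlin d) (marginLoss φ) (advLoss γ) ↔
      ∀ t : ℝ, γ < t → t ≤ 1 → φ t + φ (-t) < φ γ + φ (-γ) := by
  have hd0 : 0 < d := by omega
  have hmono : ∀ a b : ℝ, 0 ≤ a → a ≤ b → φ b + φ (-b) ≤ φ a + φ (-a) :=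
    fun a b ha hab => h_noninc φ hqce ha hab
  constructor
  · -- Calibrated → condition
    intro hcal t ht1 ht2
    by_contra hge
    push_neg at hge
    set i0 : Fin d := ⟨0, by omega⟩ with hi0
    set i1 : Fin d := ⟨1, by omega⟩ with hi1
    have hne : i0 ≠ i1 := by
      simp [hi0, hi1, Fin.ext_iff]
    set e0 : EuclideanSpace ℝ (Fin d) := EuclideanSpace.single i0 (1:ℝ) with he0
    set e1 : EuclideanSpace ℝ (Fin d) := EuclideanSpace.single i1 (1:ℝ) with he1
    have h00 : ⟪e0, e0⟫ = 1 := by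
      simp [he0, EuclideanSpace.inner_single_left, EuclideanSpace.single_apply]
    have h11 : ⟪e1, e1⟫ = 1 := by
      simp [he1, EuclideanSpace.inner_single_left, EuclideanSpace.single_apply]
    have h01 : ⟪e0, e1⟫ = 0 := by
      simp only [he0, he1, EuclideanSpace.inner_single_left, EuclideanSpace.single_apply]
      simp only [starRingEnd_apply, star_one, one_mul]
      rw [if_neg hne]
    have h10 : ⟪e1, e0⟫ = 0 := by
      simp only [he0, he1, EuclideanSpace.inner_single_left, EuclideanSpace.single_apply]
      simp only [starRingEnd_apply, star_one, one_mul]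
      rw [if_neg (fun h => hne h.symm)]
    have he0n : ‖e0‖ = 1 := by rw [he0, EuclideanSpace.norm_single]; norm_num
    set x : EuclideanSpace ℝ (Fin d) := t • e0 with hxdef
    have ht0 : 0 < t := lt_trans hγ0 ht1
    have hxnorm : ‖x‖ = t := by
      rw [hxdef, norm_smul, he0n, mul_one, Real.norm_eq_abs, abs_of_pos ht0]
    obtain ⟨δ, hδ, himp⟩ := hcal (1/4) (by norm_num) (1/2) (by norm_num) x
      (by rw [hxnorm]; exact ht2)
    set sq : ℝ := Real.sqrt (1 - (γ/t)^2) with hsq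
    have hγt1 : γ / t < 1 := (div_lt_one ht0).mpr ht1
    have hγt0 : 0 < γ / t := div_pos hγ0 ht0
    have hs2 : sq^2 = 1 - (γ/t)^2 := Real.sq_sqrt (by nlinarith)
    set w : EuclideanSpace ℝ (Fin d) := (γ/t) • e0 + sq • e1 with hwdef
    have hwsq : ⟪w, w⟫ = (γ/t)^2 + sq^2 := by
      rw [hwdef]
      simp only [inner_add_left, inner_add_right, real_inner_smul_left, real_inner_smul_right,
        h00, h11, h01, h10]
      ring
    have hwnorm : ‖w‖ = 1 := by
      have hq : ‖w‖^2 = 1 := by rw [← real_inner_self_eq_norm_sq, hwsq, hs2]; ring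
      nlinarith [norm_nonneg w]
    have hwx : ⟪w, x⟫ = γ := by
      rw [hxdef, real_inner_smul_right]
      have h : ⟪w, e0⟫ = γ / t := by
        rw [hwdef]
        simp only [inner_add_left, real_inner_smul_left, h00, h10]
        ring
      rw [h]
      field_simp
    have hmemw : (fun z => (inner ℝ w z : ℝ)) ∈ Hlin d := ⟨w, hwnorm, rfl⟩
    have hminCge : (φ γ + φ (-γ))/2 ≤ minInnerRisk (marginLoss φ) (Hlin d) x (1/2) := by
      haveI := hlin_nonempty d hd0
      apply le_ciInf
      rintro ⟨f, w', hw', rfl⟩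
      rw [innerRisk_margin]
      have hu : |⟪w', x⟫| ≤ t := by
        have h := abs_real_inner_le_norm w' x
        rwa [hw', one_mul, hxnorm] at h
      have h1 : φ t + φ (-t) ≤ φ |⟪w', x⟫| + φ (-|⟪w', x⟫|) := hmono _ t (abs_nonneg _) hu
      have h2 : φ |⟪w', x⟫| + φ (-|⟪w', x⟫|) = φ ⟪w', x⟫ + φ (-⟪w', x⟫) := by
        rcases abs_cases ⟪w', x⟫ with ⟨he, _⟩ | ⟨he, _⟩ <;> rw [he]
        rw [neg_neg, add_comm]
      rw [h2] at h1
      unfold Cfun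
      linarith
    have hrisk : innerRisk (marginLoss φ) (fun z => (inner ℝ w z : ℝ)) x (1/2)
        < minInnerRisk (marginLoss φ) (Hlin d) x (1/2) + δ := by
      rw [innerRisk_margin, hwx]
      unfold Cfun
      have h : (1/2:ℝ) * φ γ + (1 - 1/2) * φ (-γ) = (φ γ + φ (-γ))/2 := by ring
      rw [h]
      linarith
    have hadv := himp _ hmemw hrisk
    rw [innerRisk_adv γ hγ0 w x hwnorm, hwx] at hadv
    have hAγ : Afun γ (1/2) γ = 1 := by
      unfold Afun
      rw [if_pos le_rfl, if_pos (by linarith)]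
      norm_num
    rw [hAγ] at hadv
    have hmemE : (fun z => (inner ℝ e0 z : ℝ)) ∈ Hlin d := ⟨e0, he0n, rfl⟩
    have hminAdvle : minInnerRisk (advLoss γ) (Hlin d) x (1/2) ≤ 1/2 := by
      have h := ciInf_le (adv_bddBelow d γ hγ0 x (1/2) (by norm_num) (by norm_num))
        (⟨_, hmemE⟩ : Hlin d)
      rw [innerRisk_adv γ hγ0 e0 x he0n] at h
      have hex : ⟪e0, x⟫ = t := by
        rw [hxdef, real_inner_smul_right, h00]; ring
      rw [hex] at h
      have hA : Afun γ (1/2) t = 1/2 := by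
        unfold Afun
        rw [if_neg (by linarith), if_pos (by linarith)]
        norm_num
      rw [hA] at h
      exact h
    linarith
  · -- condition → Calibrated
    intro cond ε hε η hη x hx
    rcases le_or_gt ‖x‖ γ with hr | hr
    · -- small-norm case: adversarial risk is identically 1
      refine ⟨1, one_pos, ?_⟩
      rintro f ⟨w, hw, rfl⟩ _
      have hA1 : ∀ w' : EuclideanSpace ℝ (Fin d), ‖w'‖ = 1 → Afun γ η ⟪w', x⟫ = 1 := by
        intro w' hw'
        have htr : |⟪w', x⟫| ≤ γ := by
          have h := abs_real_inner_le_norm w' x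
          rw [hw', one_mul] at h
          linarith
        obtain ⟨hl, hu⟩ := abs_le.mp htr
        unfold Afun
        rw [if_pos hu, if_pos hl]
        ring
      rw [innerRisk_adv γ hγ0 w x hw, hA1 w hw]
      have hge1 : 1 ≤ minInnerRisk (advLoss γ) (Hlin d) x η := by
        haveI := hlin_nonempty d hd0
        apply le_ciInf
        rintro ⟨f, w', hw', rfl⟩
        rw [innerRisk_adv γ hγ0 w' x hw', hA1 w' hw']
      linarith
    · have hr1 : ‖x‖ ≤ 1 := hx
      have hrpos : 0 < ‖x‖ := lt_trans hγ0 hr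
      have hη0 : 0 ≤ η := hη.1
      have hη1 : η ≤ 1 := hη.2
      rcases lt_trichotomy η (1/2) with hη2 | hη2 | hη2
      · -- η < 1/2
        obtain ⟨w0, hw0n, hw0x⟩ := exists_unit_dir_neg x hrpos
        refine calib_core d hd0 γ hγ0 φ hφ0 hcont η hη0 hη1 x (-γ) ‖x‖ (by linarith)
          w0 hw0n ?_ ?_ ε hε
        · rintro u ⟨hu1, hu2⟩
          have h2 := key_ineq γ hγ0 φ hanti hmono hstrict cond ‖x‖ hr hr1 (1-η)
            (by linarith) (by linarith) (-u) (by linarith) (by linarith)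
          have h1 : Cfun φ η (-‖x‖) = Cfun φ (1-η) ‖x‖ := Cfun_neg φ η ‖x‖
          have h3 : Cfun φ (1-η) (-u) = Cfun φ (1-(1-η)) u := Cfun_neg φ (1-η) u
          have h4 : (1:ℝ) - (1-η) = η := by ring
          rw [h4] at h3
          rw [hw0x, h1]
          rw [h3] at h2
          exact h2
        · intro u hur huS
          simp only [Set.mem_Icc, not_and_or, not_le] at huS
          have hu : u < -γ := by
            rcases huS with h | h
            · linarith
            · exact absurd h (not_lt.mpr (abs_le.mp hur).2)
          have hA : Afun γ η u = η := by
            unfold Afun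
            rw [if_pos (by linarith), if_neg (by linarith)]
            ring
          rw [hA, min_eq_left (by linarith)]
      · -- η = 1/2
        subst hη2
        obtain ⟨w0, hw0n, hw0x⟩ := exists_unit_dir x hrpos
        refine calib_core d hd0 γ hγ0 φ hφ0 hcont (1/2) (by norm_num) (by norm_num) x
          (-γ) γ (by linarith) w0 hw0n ?_ ?_ ε hε
        · rintro u ⟨hu1, hu2⟩
          rw [hw0x]
          exact key_ineq_half γ φ hmono cond ‖x‖ hr hr1 u hu1 hu2
        · intro u hur huS
          simp only [Set.mem_Icc, not_and_or, not_le] at huS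
          have hA : Afun γ (1/2) u = 1/2 := by
            unfold Afun
            rcases huS with h | h
            · rw [if_pos (by linarith), if_neg (by linarith)]
              norm_num
            · rw [if_neg (by linarith), if_pos (by linarith)]
              norm_num
          rw [hA]
          norm_num
      · -- η > 1/2
        obtain ⟨w0, hw0n, hw0x⟩ := exists_unit_dir x hrpos
        refine calib_core d hd0 γ hγ0 φ hφ0 hcont η hη0 hη1 x (-‖x‖) γ (by linarith)
          w0 hw0n ?_ ?_ ε hε
        · rintro u ⟨hu1, hu2⟩
          rw [hw0x]
          exact key_ineq γ hγ0 φ hanti hmono hstrict cond ‖x‖ hr hr1 η hη2 hη1 u hu1 hu2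
        · intro u hur huS
          simp only [Set.mem_Icc, not_and_or, not_le] at huS
          have hu : γ < u := by
            rcases huS with h | h
            · exfalso
              have h1 := (abs_le.mp hur).1
              linarith
            · exact h
          have hA : Afun γ η u = 1 - η := by
            unfold Afun
            rw [if_neg (by linarith), if_pos (by linarith)]
            ring
          rw [hA, min_eq_right (by linarith)]



end
end
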